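/- arXiv:math/0405448 — 3 statements merged into one kernel-verified Lean document; each statement's English description precedes it below -/
import Mathlib

section
/- Let P ⊆ ℝ² be a two-dimensional canonical Fano polytope. If x, y are lattice points on the boundary of P that are not contained in a common facet of P and satisfy x + y ≠ 0, then {x, y} is a ℤ-basis of ℤ². Consequently, every two-dimensional terminal Fano polytope is a smooth Fano polytope, and every two-dimensional canonical Fano polytope is a reflexive polytope. -/
open scoped BigOperators

noncomputable section

/-- The standard dot product on `ℝ^d`. -/
def dotProd {d : ℕ} (x y : Fin d → ℝ) : ℝ := ∑ i, x i * y i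

/-- A point of `ℝ^d` is a lattice point (element of `ℤ^d`) if all coordinates are integers. -/
def IsLatticePoint {d : ℕ} (x : Fin d → ℝ) : Prop := ∀ i, ∃ n : ℤ, x i = (n : ℝ)

/-- A lattice polytope is the convex hull of finitely many lattice points. -/
def IsLatticePolytope {d : ℕ} (P : Set (Fin d → ℝ)) : Prop :=
  ∃ V : Finset (Fin d → ℝ), (∀ v ∈ V, IsLatticePoint v) ∧ P = convexHull ℝ (V : Set (Fin d → ℝ))

/-- The dual polytope `P* = {y | ⟨x,y⟩ ≥ -1 ∀ x ∈ P}`. -/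
def dualPolytope {d : ℕ} (P : Set (Fin d → ℝ)) : Set (Fin d → ℝ) :=
  {y | ∀ x ∈ P, -1 ≤ dotProd x y}

/-- A reflexive polytope: a full-dimensional lattice polytope with `0` in its interior whose
dual polytope is again a lattice polytope. -/
def IsReflexive {d : ℕ} (P : Set (Fin d → ℝ)) : Prop :=
  IsLatticePolytope P ∧ (0 : Fin d → ℝ) ∈ interior P ∧ IsLatticePolytope (dualPolytope P)

/-- A face of `P`: the subset of `P` where some linear functional attains its maximum bound. -/
def IsFace {d : ℕ} (P F : Set (Fin d → ℝ)) : Prop :=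
  ∃ (u : Fin d → ℝ) (c : ℝ), (∀ x ∈ P, dotProd u x ≤ c) ∧ F = {x ∈ P | dotProd u x = c}

/-- A facet of a `d`-dimensional polytope: a nonempty face of dimension `d - 1`. -/
def IsFacet {d : ℕ} (P F : Set (Fin d → ℝ)) : Prop :=
  IsFace P F ∧ F.Nonempty ∧ Module.finrank ℝ (vectorSpan ℝ F) = d - 1

/-- `x ∼ y` : `x` and `y` lie in a common facet of `P`. -/
def SameFacet {d : ℕ} (P : Set (Fin d → ℝ)) (x y : Fin d → ℝ) : Prop :=
  ∃ F, IsFacet P F ∧ x ∈ F ∧ y ∈ F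

/-- The star set of `x`: the union of all facets of `P` containing `x`. -/
def starSet {d : ℕ} (P : Set (Fin d → ℝ)) (x : Fin d → ℝ) : Set (Fin d → ℝ) :=
  {y | SameFacet P x y}

/-- A family of lattice points forming a `ℤ`-basis of the lattice `ℤ^d`. -/
def IsZBasisFamily {d n : ℕ} (s : Fin n → (Fin d → ℝ)) : Prop :=
  LinearIndependent ℝ s ∧ (∀ i, IsLatticePoint (s i)) ∧
    ∀ z : Fin d → ℝ, IsLatticePoint z → ∃ c : Fin n → ℤ, z = ∑ i, (c i : ℝ) • s i

/-- A primitive lattice point: a nonzero lattice point such that no lattice point lies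
strictly between `0` and it. -/
def IsPrimitivePoint {d : ℕ} (x : Fin d → ℝ) : Prop :=
  IsLatticePoint x ∧ x ≠ 0 ∧ ∀ y ∈ openSegment ℝ (0 : Fin d → ℝ) x, ¬ IsLatticePoint y

/-- A Fano polytope: a full-dimensional lattice polytope with `0` in its interior all of whose
vertices are primitive lattice points. -/
def IsFanoPolytope {d : ℕ} (P : Set (Fin d → ℝ)) : Prop :=
  IsLatticePolytope P ∧ (0 : Fin d → ℝ) ∈ interior P ∧
    ∀ v ∈ Set.extremePoints ℝ P, IsPrimitivePoint v

/-- Canonical: the only interior lattice point is the origin. -/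
def IsCanonicalPolytope {d : ℕ} (P : Set (Fin d → ℝ)) : Prop :=
  {x ∈ interior P | IsLatticePoint x} = {0}

/-- Terminal: the only lattice points of `P` are the origin and the vertices. -/
def IsTerminalPolytope {d : ℕ} (P : Set (Fin d → ℝ)) : Prop :=
  {x ∈ P | IsLatticePoint x} = insert (0 : Fin d → ℝ) (Set.extremePoints ℝ P)

/-- Simplicial: every facet has exactly `d` vertices. -/
def IsSimplicial {d : ℕ} (P : Set (Fin d → ℝ)) : Prop :=
  ∀ F, IsFacet P F → (Set.extremePoints ℝ F).ncard = d

/-- Smooth: the vertices of every facet form a `ℤ`-basis of the lattice. -/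
def IsSmoothPolytope {d : ℕ} (P : Set (Fin d → ℝ)) : Prop :=
  ∀ F, IsFacet P F → ∃ s : Fin d → (Fin d → ℝ),
    Set.extremePoints ℝ F = Set.range s ∧ IsZBasisFamily s

/-- Semi-terminal: any two distinct vertices in a common facet are joined by a lattice-point
free segment. -/
def IsSemiTerminal {d : ℕ} (P : Set (Fin d → ℝ)) : Prop :=
  ∀ v ∈ Set.extremePoints ℝ P, ∀ w ∈ Set.extremePoints ℝ P, v ≠ w → SameFacet P v w →
    {x ∈ segment ℝ v w | IsLatticePoint x} = {v, w}

/-- The quotient space `ℝ^d / ℝv`. -/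
abbrev QuotSpace {d : ℕ} (v : Fin d → ℝ) := (Fin d → ℝ) ⧸ (Submodule.span ℝ {v})

/-- The canonical projection `π_v : ℝ^d → ℝ^d/ℝv`. -/
def projAlong {d : ℕ} (v : Fin d → ℝ) : (Fin d → ℝ) →ₗ[ℝ] QuotSpace v :=
  (Submodule.span ℝ {v}).mkQ

/-- The quotient lattice `ℤ^d/ℤv`, regarded as the image of `ℤ^d` in `ℝ^d/ℝv`. -/
def quotLattice {d : ℕ} (v : Fin d → ℝ) : Set (QuotSpace v) :=
  projAlong v '' {x | IsLatticePoint x}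

/-- A primitive point of the quotient lattice `ℤ^d/ℤv`. -/
def QuotPrimitive {d : ℕ} (v : Fin d → ℝ) (q : QuotSpace v) : Prop :=
  q ∈ quotLattice v ∧ q ≠ 0 ∧ ∀ t ∈ openSegment ℝ (0 : QuotSpace v) q, t ∉ quotLattice v

/-- A Fano polytope in the quotient space `ℝ^d/ℝv` with respect to the lattice `ℤ^d/ℤv`. -/
def QuotIsFanoPolytope {d : ℕ} (v : Fin d → ℝ) (Q : Set (QuotSpace v)) : Prop :=
  (∃ V : Finset (QuotSpace v), (∀ q ∈ V, q ∈ quotLattice v) ∧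
      Q = convexHull ℝ (V : Set (QuotSpace v))) ∧
  (0 : QuotSpace v) ∈ interior Q ∧
  ∀ q ∈ Set.extremePoints ℝ Q, QuotPrimitive v q

/-- Unimodular equivalence: a real linear isomorphism mapping lattice onto lattice and one
polytope onto the other. -/
def LatticeEquivTo {d e : ℕ} (P : Set (Fin d → ℝ)) (Q : Set (Fin e → ℝ)) : Prop :=
  ∃ f : (Fin d → ℝ) ≃ₗ[ℝ] (Fin e → ℝ),
    (∀ x, IsLatticePoint x ↔ IsLatticePoint (f x)) ∧ f '' P = Q

/-- The hexagon `Z₂ = conv(±(1,0), ±(0,1), ±(1,1)) ⊆ ℝ²`. -/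
def Z2 : Set (Fin 2 → ℝ) :=
  convexHull ℝ ({![1,0], ![0,1], ![1,1], ![-1,0], ![0,-1], ![-1,-1]} : Set (Fin 2 → ℝ))

/-- The `j`-th coordinate pair of a point of `ℝ^{2m}`. -/
def pairCoords {m : ℕ} (x : Fin (2 * m) → ℝ) (j : Fin m) : Fin 2 → ℝ :=
  fun i => x ⟨2 * (j : ℕ) + (i : ℕ), by have := j.isLt; have := i.isLt; omega⟩

/-- The `m`-fold product `Z₂ × ⋯ × Z₂ ⊆ ℝ^{2m}`. -/
def prodZ2 (m : ℕ) : Set (Fin (2 * m) → ℝ) := {x | ∀ j : Fin m, pairCoords x j ∈ Z2}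

/-- The `j`-th coordinate pair of a point of `ℝ^{2m+1}` (first `2m` coordinates). -/
def pairCoords' {m : ℕ} (x : Fin (2 * m + 1) → ℝ) (j : Fin m) : Fin 2 → ℝ :=
  fun i => x ⟨2 * (j : ℕ) + (i : ℕ), by have := j.isLt; have := i.isLt; omega⟩

/-- The product `[-1,1] × Z₂ × ⋯ × Z₂ ⊆ ℝ^{2m+1}` with `m` hexagon factors. -/
def boxProdZ2 (m : ℕ) : Set (Fin (2 * m + 1) → ℝ) :=
  {x | x ⟨2 * m, by omega⟩ ∈ Set.Icc (-1 : ℝ) 1 ∧ ∀ j : Fin m, pairCoords' x j ∈ Z2}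

namespace DimTwoAux

open Set

/-! ### dot product basics -/

lemma dotProd_eq {d : ℕ} (x y : Fin d → ℝ) : dotProd x y = dotProduct x y := rfl

lemma dotProd_comm {d : ℕ} (x y : Fin d → ℝ) : dotProd x y = dotProd y x := by
  simp [dotProd_eq, dotProduct_comm]

/-- `dotProd u ·` as a linear map. -/
def dotL {d : ℕ} (u : Fin d → ℝ) : (Fin d → ℝ) →ₗ[ℝ] ℝ where
  toFun x := dotProd u x
  map_add' x y := by
    simp [dotProd, mul_add, Finset.sum_add_distrib]
  map_smul' c x := by
    simp only [dotProd, Pi.smul_apply, smul_eq_mul, RingHom.id_apply, Finset.mul_sum]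
    exact Finset.sum_congr rfl fun i _ => by ring

lemma dotL_apply {d : ℕ} (u x : Fin d → ℝ) : dotL u x = dotProd u x := rfl

lemma dotProd_self_nonneg {d : ℕ} (x : Fin d → ℝ) : 0 ≤ dotProd x x :=
  Finset.sum_nonneg fun i _ => mul_self_nonneg _

lemma dotProd_self_pos {d : ℕ} {x : Fin d → ℝ} (hx : x ≠ 0) : 0 < dotProd x x := by
  rcases lt_or_eq_of_le (dotProd_self_nonneg x) with h | h
  · exact h
  · exfalso; apply hx
    have : dotProduct x x = 0 := by rw [← dotProd_eq, ← h]
    exact (dotProduct_self_eq_zero).1 this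

lemma dotProd_smul_right {d : ℕ} (u : Fin d → ℝ) (c : ℝ) (x : Fin d → ℝ) :
    dotProd u (c • x) = c * dotProd u x := (dotL u).map_smul c x

lemma dotProd_add_right {d : ℕ} (u x y : Fin d → ℝ) :
    dotProd u (x + y) = dotProd u x + dotProd u y := (dotL u).map_add x y

lemma dotProd_sub_right {d : ℕ} (u x y : Fin d → ℝ) :
    dotProd u (x - y) = dotProd u x - dotProd u y := (dotL u).map_sub x y

lemma dotProd_zero_right {d : ℕ} (u : Fin d → ℝ) : dotProd u 0 = 0 := (dotL u).map_zero

lemma dotProd_smul_left {d : ℕ} (c : ℝ) (u x : Fin d → ℝ) :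
    dotProd (c • u) x = c * dotProd u x := by
  rw [dotProd_comm, dotProd_smul_right, dotProd_comm]

lemma dotProd_add_left {d : ℕ} (u v x : Fin d → ℝ) :
    dotProd (u + v) x = dotProd u x + dotProd v x := by
  rw [dotProd_comm, dotProd_add_right, dotProd_comm, dotProd_comm x v]

lemma continuous_dotProd {d : ℕ} (u : Fin d → ℝ) : Continuous (fun x => dotProd u x) :=
  LinearMap.continuous_of_finiteDimensional (dotL u)

/-! ### lattice point basics -/

lemma latt_zero {d : ℕ} : IsLatticePoint (0 : Fin d → ℝ) := fun _ => ⟨0, by simp⟩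

lemma latt_neg {d : ℕ} {x : Fin d → ℝ} (hx : IsLatticePoint x) : IsLatticePoint (-x) := by
  intro i; obtain ⟨n, hn⟩ := hx i; exact ⟨-n, by simp [hn]⟩

lemma latt_add {d : ℕ} {x y : Fin d → ℝ} (hx : IsLatticePoint x) (hy : IsLatticePoint y) :
    IsLatticePoint (x + y) := by
  intro i; obtain ⟨n, hn⟩ := hx i; obtain ⟨m, hm⟩ := hy i
  exact ⟨n + m, by simp [hn, hm]⟩

lemma latt_sub {d : ℕ} {x y : Fin d → ℝ} (hx : IsLatticePoint x) (hy : IsLatticePoint y) :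
    IsLatticePoint (x - y) := by
  intro i; obtain ⟨n, hn⟩ := hx i; obtain ⟨m, hm⟩ := hy i
  exact ⟨n - m, by simp [hn, hm]⟩

lemma latt_zsmul {d : ℕ} (n : ℤ) {x : Fin d → ℝ} (hx : IsLatticePoint x) :
    IsLatticePoint ((n : ℝ) • x) := by
  intro i; obtain ⟨m, hm⟩ := hx i; exact ⟨n * m, by simp [hm]⟩

end DimTwoAux
namespace DimTwoAux

lemma dotProd_zero_left {d : ℕ} (x : Fin d → ℝ) : dotProd 0 x = 0 := by
  rw [dotProd_comm]; exact dotProd_zero_right x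

/-- Bounded sets of lattice points are finite. -/
lemma latt_bounded_finite {d : ℕ} {S : Set (Fin d → ℝ)} (hS : Bornology.IsBounded S) :
    {x ∈ S | IsLatticePoint x}.Finite := by
  obtain ⟨C, hC⟩ := hS.exists_norm_le
  set T : Set (Fin d → ℤ) := Set.pi Set.univ (fun _ => Set.Icc (-⌈C⌉) ⌈C⌉) with hT
  have hTfin : T.Finite := Set.Finite.pi fun _ => Set.finite_Icc _ _
  apply Set.Finite.subset (hTfin.image (fun n : Fin d → ℤ => fun i => (n i : ℝ)))
  rintro x ⟨hxS, hxl⟩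
  refine ⟨fun i => (hxl i).choose, ?_, ?_⟩
  · intro i _
    have hx : x i = ((hxl i).choose : ℝ) := (hxl i).choose_spec
    have h1 : |x i| ≤ C := le_trans (norm_le_pi_norm x i) (hC x hxS)
    have h2 : |((hxl i).choose : ℝ)| ≤ (⌈C⌉ : ℝ) := by
      rw [← hx]; exact le_trans h1 (Int.le_ceil C)
    have h3 : |(hxl i).choose| ≤ ⌈C⌉ := by
      have := (by rwa [← Int.cast_abs] at h2 : ((|(hxl i).choose| : ℤ) : ℝ) ≤ ((⌈C⌉ : ℤ) : ℝ))
      exact_mod_cast this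
    simp only [Set.mem_Icc]
    exact abs_le.1 h3
  · funext i
    exact ((hxl i).choose_spec).symm

section Polytope

variable {P : Set (Fin 2 → ℝ)} {V : Finset (Fin 2 → ℝ)}

lemma convex_P (hPV : P = convexHull ℝ (V : Set (Fin 2 → ℝ))) : Convex ℝ P :=
  hPV ▸ convex_convexHull ℝ _

lemma compact_P (hPV : P = convexHull ℝ (V : Set (Fin 2 → ℝ))) : IsCompact P :=
  hPV ▸ V.finite_toSet.isCompact_convexHull ℝ

lemma closed_P (hPV : P = convexHull ℝ (V : Set (Fin 2 → ℝ))) : IsClosed P :=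
  (compact_P hPV).isClosed

lemma hull_bound (hPV : P = convexHull ℝ (V : Set (Fin 2 → ℝ))) {u : Fin 2 → ℝ} {c : ℝ}
    (hv : ∀ v ∈ V, dotProd u v ≤ c) : ∀ x ∈ P, dotProd u x ≤ c := by
  subst hPV
  intro x hx
  have hconv : Convex ℝ {y : Fin 2 → ℝ | dotL u y ≤ c} :=
    convex_halfSpace_le (LinearMap.isLinear (dotL u)) c
  exact convexHull_min (fun v hv' => hv v hv') hconv hx

lemma smul_mem_interior (hPV : P = convexHull ℝ (V : Set (Fin 2 → ℝ)))
    (h0 : (0 : Fin 2 → ℝ) ∈ interior P) {m : Fin 2 → ℝ} (hm : m ∈ P) {t : ℝ}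
    (h0t : 0 ≤ t) (ht : t < 1) : t • m ∈ interior P := by
  have := (convex_P hPV).combo_interior_self_mem_interior h0 hm
    (a := 1 - t) (b := t) (by linarith) h0t (by ring)
  simpa using this

lemma support_pos (hPV : P = convexHull ℝ (V : Set (Fin 2 → ℝ)))
    (h0 : (0 : Fin 2 → ℝ) ∈ interior P) {u : Fin 2 → ℝ} {c : ℝ} (hu : u ≠ 0)
    (hb : ∀ x ∈ P, dotProd u x ≤ c) : 0 < c := by
  obtain ⟨ε, hε, hball⟩ := Metric.isOpen_iff.1 isOpen_interior 0 h0
  have hun : 0 < ‖u‖ := norm_pos_iff.2 hu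
  set x : Fin 2 → ℝ := (ε / (2 * ‖u‖)) • u with hxdef
  have hxball : x ∈ Metric.ball (0 : Fin 2 → ℝ) ε := by
    rw [mem_ball_zero_iff, hxdef, norm_smul]
    have : |ε / (2 * ‖u‖)| = ε / (2 * ‖u‖) := abs_of_pos (by positivity)
    rw [Real.norm_eq_abs, this]
    rw [div_mul_eq_mul_div, mul_comm]
    rw [div_lt_iff₀ (by positivity)]
    nlinarith [hun, hε]
  have hxP : x ∈ P := interior_subset (hball hxball)
  have := hb x hxP
  rw [hxdef, dotProd_smul_right] at this
  have hpos : 0 < ε / (2 * ‖u‖) * dotProd u u := by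
    have := dotProd_self_pos hu
    positivity
  linarith

lemma frontier_subset_P (hPV : P = convexHull ℝ (V : Set (Fin 2 → ℝ))) :
    frontier P ⊆ P := by
  rw [(closed_P hPV).frontier_eq]; exact Set.diff_subset

lemma frontier_not_interior (hPV : P = convexHull ℝ (V : Set (Fin 2 → ℝ)))
    {x : Fin 2 → ℝ} (hx : x ∈ frontier P) : x ∉ interior P := by
  rw [(closed_P hPV).frontier_eq] at hx; exact hx.2

lemma frontier_ne_zero (hPV : P = convexHull ℝ (V : Set (Fin 2 → ℝ)))
    (h0 : (0 : Fin 2 → ℝ) ∈ interior P) {x : Fin 2 → ℝ} (hx : x ∈ frontier P) : x ≠ 0 := by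
  intro h; exact frontier_not_interior hPV hx (h ▸ h0)

/-- Supporting functional at a frontier point. -/
lemma supp_exists (hPV : P = convexHull ℝ (V : Set (Fin 2 → ℝ)))
    (h0 : (0 : Fin 2 → ℝ) ∈ interior P) {x : Fin 2 → ℝ} (hx : x ∈ frontier P) :
    ∃ u : Fin 2 → ℝ, u ≠ 0 ∧ ∀ p ∈ P, dotProd u p ≤ dotProd u x := by
  obtain ⟨f, hf⟩ := geometric_hahn_banach_open_point
    ((convex_P hPV).interior) isOpen_interior (frontier_not_interior hPV hx)
  have hfx : 0 < f x := by
    have := hf 0 h0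
    simpa using this
  have hfP : ∀ p ∈ P, f p ≤ f x := by
    intro p hp
    by_contra hlt
    push_neg at hlt
    set t : ℝ := (f x + f p) / (2 * f p) with htdef
    have hfp : 0 < f p := lt_trans hfx hlt
    have ht0 : 0 < t := by positivity
    have ht1 : t < 1 := by rw [htdef, div_lt_one (by positivity)]; linarith
    have hmem := smul_mem_interior hPV h0 hp ht0.le ht1
    have := hf _ hmem
    rw [map_smul, smul_eq_mul] at this
    have h2 : t * f p = (f x + f p) / 2 := by
      rw [htdef]; field_simp
    rw [h2] at this
    linarith
  set u : Fin 2 → ℝ := fun i => f (fun j => if i = j then 1 else 0) with hudef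
  have hrep : ∀ p : Fin 2 → ℝ, dotProd u p = f p := by
    intro p
    conv_rhs => rw [pi_eq_sum_univ p]
    rw [map_sum]
    rw [hudef]
    unfold dotProd
    exact Finset.sum_congr rfl fun i _ => by rw [map_smul, smul_eq_mul, mul_comm]
  refine ⟨u, ?_, fun p hp => by rw [hrep, hrep]; exact hfP p hp⟩
  intro hu0
  have := hrep x
  rw [hu0, dotProd_zero_left] at this
  rw [← this] at hfx
  exact lt_irrefl 0 hfx

end Polytope

end DimTwoAux
namespace DimTwoAux

open Set

lemma ker_dim {u : Fin 2 → ℝ} (hu : u ≠ 0) :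
    Module.finrank ℝ (LinearMap.ker (dotL u)) = 1 := by
  have hsurj : Function.Surjective (dotL u) := by
    intro r
    refine ⟨(r / dotProd u u) • u, ?_⟩
    rw [dotL_apply, dotProd_smul_right]
    field_simp [ne_of_gt (dotProd_self_pos hu)]
  have h1 := LinearMap.finrank_range_add_finrank_ker (dotL u)
  rw [LinearMap.range_eq_top.2 hsurj, finrank_top, Module.finrank_self] at h1
  have h2 : Module.finrank ℝ (Fin 2 → ℝ) = 2 := Module.finrank_fin_fun ℝ
  omega

lemma vectorSpan_face_le (P : Set (Fin 2 → ℝ)) (u : Fin 2 → ℝ) (c : ℝ) :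
    vectorSpan ℝ {p ∈ P | dotProd u p = c} ≤ LinearMap.ker (dotL u) := by
  rw [vectorSpan_def, Submodule.span_le]
  rintro z hz
  rw [Set.mem_vsub] at hz
  obtain ⟨p, hp, q, hq, rfl⟩ := hz
  simp only [SetLike.mem_coe, LinearMap.mem_ker, vsub_eq_sub]
  rw [map_sub, dotL_apply, dotL_apply, hp.2, hq.2, sub_self]

section Polytope

variable {P : Set (Fin 2 → ℝ)} {V : Finset (Fin 2 → ℝ)}

lemma facet_of_two_points (hPV : P = convexHull ℝ (V : Set (Fin 2 → ℝ)))
    {u : Fin 2 → ℝ} {c : ℝ} {x y : Fin 2 → ℝ} (hu : u ≠ 0)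
    (hb : ∀ p ∈ P, dotProd u p ≤ c) (hx : x ∈ P) (hy : y ∈ P) (hxy : x ≠ y)
    (hcx : dotProd u x = c) (hcy : dotProd u y = c) :
    IsFacet P {p ∈ P | dotProd u p = c} := by
  refine ⟨⟨u, c, hb, rfl⟩, ⟨x, hx, hcx⟩, ?_⟩
  have hle : vectorSpan ℝ {p ∈ P | dotProd u p = c} ≤ LinearMap.ker (dotL u) :=
    vectorSpan_face_le P u c
  have h1 : Module.finrank ℝ (vectorSpan ℝ {p ∈ P | dotProd u p = c}) ≤ 1 := by
    have := Submodule.finrank_mono hle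
    rwa [ker_dim hu] at this
  have hmem : y - x ∈ vectorSpan ℝ {p ∈ P | dotProd u p = c} := by
    have hyF : y ∈ {p ∈ P | dotProd u p = c} := ⟨hy, hcy⟩
    have hxF : x ∈ {p ∈ P | dotProd u p = c} := ⟨hx, hcx⟩
    have := vsub_mem_vectorSpan (k := ℝ) hyF hxF
    rwa [vsub_eq_sub] at this
  have h2 : vectorSpan ℝ {p ∈ P | dotProd u p = c} ≠ ⊥ := by
    intro hbot
    rw [hbot, Submodule.mem_bot, sub_eq_zero] at hmem
    exact hxy hmem.symm
  have h3 : Module.finrank ℝ (vectorSpan ℝ {p ∈ P | dotProd u p = c}) ≠ 0 := by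
    intro h0
    exact h2 (Submodule.finrank_eq_zero.1 h0)
  omega

lemma mem_P_of_mem_V (hPV : P = convexHull ℝ (V : Set (Fin 2 → ℝ))) {v : Fin 2 → ℝ}
    (hv : v ∈ V) : v ∈ P := hPV ▸ subset_convexHull ℝ _ hv

/-- Every frontier point of `P` lies in a facet. -/
lemma frontier_facet (hPV : P = convexHull ℝ (V : Set (Fin 2 → ℝ)))
    (h0 : (0 : Fin 2 → ℝ) ∈ interior P) {x : Fin 2 → ℝ} (hx : x ∈ frontier P) :
    ∃ F, IsFacet P F ∧ x ∈ F := by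
  obtain ⟨u, hu, hb⟩ := supp_exists hPV h0 hx
  set c := dotProd u x with hc
  have hxP : x ∈ P := frontier_subset_P hPV hx
  have hcpos : 0 < c := support_pos hPV h0 hu hb
  by_cases hex : ∃ p ∈ P, p ≠ x ∧ dotProd u p = c
  · obtain ⟨p, hp, hpne, hpc⟩ := hex
    exact ⟨_, facet_of_two_points hPV hu hb hxP hp (Ne.symm hpne) rfl hpc,
      ⟨hxP, rfl⟩⟩
  · push_neg at hex
    have hlt : ∀ p ∈ P, p ≠ x → dotProd u p < c :=
      fun p hp hne => lt_of_le_of_ne (hb p hp) (hex p hp hne)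
    have hx0 : x ≠ 0 := frontier_ne_zero hPV h0 hx
    set w : Fin 2 → ℝ := ![-(x 1), x 0] with hw
    have hwx : dotProd w x = 0 := by
      simp [dotProd, Fin.sum_univ_two, hw]; ring
    have hw0 : w ≠ 0 := by
      intro h
      apply hx0
      have h1 : w 0 = 0 := by rw [h]; rfl
      have h2 : w 1 = 0 := by rw [h]; rfl
      simp only [hw] at h1 h2
      funext i
      fin_cases i
      · simpa using h2
      · simpa using h1
    have hVpos : ∃ v ∈ V, 0 < dotProd w v := by
      by_contra hcon
      push_neg at hcon
      have := support_pos hPV h0 hw0 (hull_bound hPV (c := 0) hcon)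
      exact lt_irrefl 0 this
    set Vp : Finset (Fin 2 → ℝ) := V.filter (fun v => 0 < dotProd w v) with hVpdef
    have hVp : Vp.Nonempty := by
      obtain ⟨v, hv, hvp⟩ := hVpos
      exact ⟨v, Finset.mem_filter.2 ⟨hv, hvp⟩⟩
    set g : (Fin 2 → ℝ) → ℝ := fun v => (c - dotProd u v) / dotProd w v with hg
    have hVfacts : ∀ v ∈ Vp, v ∈ V ∧ 0 < dotProd w v ∧ v ≠ x ∧ dotProd u v < c ∧ 0 < g v := by
      intro v hv
      rw [hVpdef, Finset.mem_filter] at hv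
      have hvne : v ≠ x := by
        intro h; rw [h, hwx] at hv; exact lt_irrefl 0 hv.2
      have hulv : dotProd u v < c := hlt v (mem_P_of_mem_V hPV hv.1) hvne
      exact ⟨hv.1, hv.2, hvne, hulv, div_pos (by linarith) hv.2⟩
    set t := Vp.inf' hVp g with ht
    have htpos : 0 < t := by
      rw [ht, Finset.lt_inf'_iff]
      intro v hv
      exact (hVfacts v hv).2.2.2.2
    obtain ⟨v₀, hv₀mem, hv₀⟩ := Finset.exists_mem_eq_inf' hVp g
    set u' : Fin 2 → ℝ := u + t • w with hu'
    have hu'eval : ∀ p, dotProd u' p = dotProd u p + t * dotProd w p := by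
      intro p
      rw [hu', dotProd_add_left, dotProd_smul_left]
    have hbV : ∀ v ∈ V, dotProd u' v ≤ c := by
      intro v hv
      rw [hu'eval]
      by_cases hvw : 0 < dotProd w v
      · have hvVp : v ∈ Vp := Finset.mem_filter.2 ⟨hv, hvw⟩
        have hle : t ≤ g v := ht ▸ Finset.inf'_le g hvVp
        have : t * dotProd w v ≤ g v * dotProd w v :=
          mul_le_mul_of_nonneg_right hle (le_of_lt hvw)
        rw [hg] at this
        rw [div_mul_cancel₀ _ (ne_of_gt hvw)] at this
        linarith
      · push_neg at hvw
        have h1 : t * dotProd w v ≤ 0 := mul_nonpos_of_nonneg_of_nonpos htpos.le hvw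
        have h2 := hb v (mem_P_of_mem_V hPV hv)
        linarith
    have hb' : ∀ p ∈ P, dotProd u' p ≤ c := hull_bound hPV hbV
    have hu'x : dotProd u' x = c := by rw [hu'eval, hwx]; ring_nf; exact hc.symm
    obtain ⟨_, hv₀w, hv₀ne, hv₀u, _⟩ := hVfacts v₀ hv₀mem
    have hv₀P : v₀ ∈ P := mem_P_of_mem_V hPV (hVfacts v₀ hv₀mem).1
    have hu'v₀ : dotProd u' v₀ = c := by
      have hteq : t = g v₀ := ht.trans hv₀
      rw [hu'eval, hteq]
      show dotProd u v₀ + (c - dotProd u v₀) / dotProd w v₀ * dotProd w v₀ = c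
      rw [div_mul_cancel₀ _ (ne_of_gt hv₀w)]
      ring
    have hu'0 : u' ≠ 0 := by
      intro h
      rw [h, dotProd_zero_left] at hu'x
      exact (ne_of_gt hcpos) hu'x.symm
    exact ⟨_, facet_of_two_points hPV hu'0 hb' hxP hv₀P (Ne.symm hv₀ne) hu'x hu'v₀,
      ⟨hxP, hu'x⟩⟩

/-- If a point of the open segment between two distinct points of `P` is on the frontier,
the two points lie in a common facet. -/
lemma sameFacet_of_frontier_seg (hPV : P = convexHull ℝ (V : Set (Fin 2 → ℝ)))
    (h0 : (0 : Fin 2 → ℝ) ∈ interior P) {x y z : Fin 2 → ℝ} (hx : x ∈ P) (hy : y ∈ P)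
    (hxy : x ≠ y) (hz : z ∈ openSegment ℝ x y) (hzf : z ∈ frontier P) : SameFacet P x y := by
  obtain ⟨u, hu, hb⟩ := supp_exists hPV h0 hzf
  set c := dotProd u z with hc
  obtain ⟨a, b, ha, hb', hab, rfl⟩ := hz
  have hcomb : a * dotProd u x + b * dotProd u y = c := by
    rw [hc, dotProd_add_right, dotProd_smul_right, dotProd_smul_right]
  have hux : dotProd u x ≤ c := hb x hx
  have huy : dotProd u y ≤ c := hb y hy
  have h4 : a * c + b * c = c := by rw [← add_mul, hab, one_mul]
  have hxc : dotProd u x = c := by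
    by_contra h
    have h1 : dotProd u x < c := lt_of_le_of_ne hux h
    have h2 : a * dotProd u x < a * c := mul_lt_mul_of_pos_left h1 ha
    have h3 : b * dotProd u y ≤ b * c := mul_le_mul_of_nonneg_left huy hb'.le
    linarith
  have hyc : dotProd u y = c := by
    by_contra h
    have h1 : dotProd u y < c := lt_of_le_of_ne huy h
    have h2 : b * dotProd u y < b * c := mul_lt_mul_of_pos_left h1 hb'
    have h3 : a * dotProd u x ≤ a * c := mul_le_mul_of_nonneg_left hux ha.le
    linarith
  exact ⟨_, facet_of_two_points hPV hu hb hx hy hxy hxc hyc,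
    ⟨hx, hxc⟩, ⟨hy, hyc⟩⟩

/-- Every ray from the origin meets the frontier. -/
lemma ray_frontier (hPV : P = convexHull ℝ (V : Set (Fin 2 → ℝ)))
    (h0 : (0 : Fin 2 → ℝ) ∈ interior P) {p : Fin 2 → ℝ} (hp : p ≠ 0) :
    ∃ t : ℝ, 0 < t ∧ t • p ∈ frontier P := by
  set S : Set ℝ := {t : ℝ | 0 ≤ t ∧ t • p ∈ P} with hS
  have hS0 : (0 : ℝ) ∈ S := ⟨le_refl 0, by rw [zero_smul]; exact interior_subset h0⟩
  obtain ⟨C, hC⟩ := (compact_P hPV).isBounded.exists_norm_le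
  have hpn : 0 < ‖p‖ := norm_pos_iff.2 hp
  have hbdd : BddAbove S := by
    refine ⟨C / ‖p‖, fun t ht => ?_⟩
    have h1 : ‖t • p‖ ≤ C := hC _ ht.2
    rw [norm_smul, Real.norm_eq_abs, abs_of_nonneg ht.1] at h1
    rw [le_div_iff₀ hpn]
    exact h1
  have hScl : IsClosed S := by
    have h1 : IsClosed {t : ℝ | t • p ∈ P} :=
      (closed_P hPV).preimage (continuous_id.smul continuous_const)
    exact (isClosed_Ici.inter h1 : IsClosed (Set.Ici 0 ∩ {t : ℝ | t • p ∈ P}))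
  set T := sSup S with hT
  have hTS : T ∈ S := hScl.csSup_mem ⟨0, hS0⟩ hbdd
  obtain ⟨ε, hε, hball⟩ := Metric.isOpen_iff.1 isOpen_interior 0 h0
  have hsmall : ε / (2 * ‖p‖) ∈ S := by
    constructor
    · positivity
    · refine interior_subset (hball ?_)
      rw [mem_ball_zero_iff, norm_smul, Real.norm_eq_abs, abs_of_pos (by positivity)]
      rw [div_mul_eq_mul_div, div_lt_iff₀ (by positivity)]
      nlinarith
  have hTpos : 0 < T := lt_of_lt_of_le (by positivity) (le_csSup hbdd hsmall)
  refine ⟨T, hTpos, ?_⟩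
  rw [(closed_P hPV).frontier_eq]
  refine ⟨hTS.2, fun hint => ?_⟩
  have hUopen : IsOpen {t : ℝ | t • p ∈ interior P} :=
    isOpen_interior.preimage (continuous_id.smul continuous_const)
  obtain ⟨δ, hδ, hδball⟩ := Metric.isOpen_iff.1 hUopen T hint
  have hmem : T + δ / 2 ∈ S := by
    have h1 : T + δ / 2 ∈ Metric.ball T δ := by
      rw [Metric.mem_ball, Real.dist_eq]
      have he : T + δ / 2 - T = δ / 2 := by ring
      rw [he, abs_of_pos (by positivity)]
      linarith
    exact ⟨by positivity, interior_subset (hδball h1)⟩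
  have := le_csSup hbdd hmem
  linarith

end Polytope

end DimTwoAux
namespace DimTwoAux

open Set

lemma endpoint_extreme {F : Set (Fin 2 → ℝ)} {d₀ e : Fin 2 → ℝ} (hd₀ : d₀ ≠ 0) (heF : e ∈ F)
    (hpar : ∀ p ∈ F, ∃ s : ℝ, 0 ≤ s ∧ p = e + s • d₀) : e ∈ Set.extremePoints ℝ F := by
  refine ⟨heF, fun x₁ h₁ x₂ h₂ hseg => ?_⟩
  obtain ⟨s₁, hs₁0, hx₁⟩ := hpar x₁ h₁
  obtain ⟨s₂, hs₂0, hx₂⟩ := hpar x₂ h₂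
  obtain ⟨a, b, ha, hb, hab, heq⟩ := hseg
  have hv : a • e + b • e = e := by rw [← add_smul, hab, one_smul]
  have key : (a * s₁ + b * s₂) • d₀ = 0 := by
    have h2 : a • x₁ + b • x₂ = e := heq
    rw [hx₁, hx₂] at h2
    have h3 : a • (e + s₁ • d₀) + b • (e + s₂ • d₀)
        = (a • e + b • e) + (a * s₁ + b * s₂) • d₀ := by
      rw [smul_add, smul_add, smul_smul, smul_smul, add_smul]; abel
    rw [h3, hv] at h2
    rwa [add_eq_left] at h2
  have hs : a * s₁ + b * s₂ = 0 := by
    rcases smul_eq_zero.1 key with h | h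
    · exact h
    · exact absurd h hd₀
  have hs₁ : s₁ = 0 := by nlinarith
  have hs₂ : s₂ = 0 := by nlinarith
  exact by rw [hx₁, hs₁, zero_smul, add_zero]

section Polytope

variable {P : Set (Fin 2 → ℝ)} {V : Finset (Fin 2 → ℝ)}

lemma face_isExtreme {u : Fin 2 → ℝ} {c : ℝ}
    (hb : ∀ p ∈ P, dotProd u p ≤ c) :
    IsExtreme ℝ P {p ∈ P | dotProd u p = c} := by
  refine ⟨Set.sep_subset _ _, ?_⟩
  rintro x₁ h₁ x₂ h₂ z ⟨hzP, hzc⟩ ⟨a, b, ha, hb', hab, heq⟩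
  have hcomb : a * dotProd u x₁ + b * dotProd u x₂ = c := by
    rw [← hzc, ← heq, dotProd_add_right, dotProd_smul_right, dotProd_smul_right]
  have hux : dotProd u x₁ ≤ c := hb x₁ h₁
  have huy : dotProd u x₂ ≤ c := hb x₂ h₂
  have h4 : a * c + b * c = c := by rw [← add_mul, hab, one_mul]
  have hx₁c : dotProd u x₁ = c := by
    by_contra h
    have h1 : dotProd u x₁ < c := lt_of_le_of_ne hux h
    have h2 : a * dotProd u x₁ < a * c := mul_lt_mul_of_pos_left h1 ha
    have h3 : b * dotProd u x₂ ≤ b * c := mul_le_mul_of_nonneg_left huy hb'.le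
    linarith
  have hx₂c : dotProd u x₂ = c := by
    by_contra h
    have h1 : dotProd u x₂ < c := lt_of_le_of_ne huy h
    have h2 : b * dotProd u x₂ < b * c := mul_lt_mul_of_pos_left h1 hb'
    have h3 : a * dotProd u x₁ ≤ a * c := mul_le_mul_of_nonneg_left hux ha.le
    linarith
  exact ⟨h₁, hx₁c⟩

lemma combo_eq (v w : Fin 2 → ℝ) (t : ℝ) : v + t • (w - v) = (1 - t) • v + t • w := by
  rw [smul_sub, sub_smul, one_smul]; abel

/-- Structure of a facet of a planar polytope: it is a segment whose endpoints are
extreme points of `P`. -/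
lemma facet_struct (hPV : P = convexHull ℝ (V : Set (Fin 2 → ℝ)))
    (h0 : (0 : Fin 2 → ℝ) ∈ interior P) {F : Set (Fin 2 → ℝ)} (hF : IsFacet P F) :
    ∃ (u : Fin 2 → ℝ) (c : ℝ) (v w : Fin 2 → ℝ),
      u ≠ 0 ∧ 0 < c ∧ (∀ p ∈ P, dotProd u p ≤ c) ∧ F = {p ∈ P | dotProd u p = c} ∧
      v ≠ w ∧ v ∈ F ∧ w ∈ F ∧ F = segment ℝ v w ∧ Set.extremePoints ℝ F = {v, w} ∧
      v ∈ Set.extremePoints ℝ P ∧ w ∈ Set.extremePoints ℝ P := by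
  obtain ⟨⟨u, c, hb, hFeq⟩, hFne, hrank⟩ := hF
  have hrank1 : Module.finrank ℝ (vectorSpan ℝ F) = 1 := hrank
  have hu : u ≠ 0 := by
    intro hu0
    subst hu0
    have hc0 : c = 0 := by
      obtain ⟨z, hz⟩ := hFne
      rw [hFeq] at hz
      rw [← hz.2, dotProd_zero_left]
    have hFP : F = P := by
      rw [hFeq, hc0]
      ext p
      simp [dotProd_zero_left]
    rw [hFP] at hrank1
    have htop : affineSpan ℝ P = ⊤ :=
      (Convex.interior_nonempty_iff_affineSpan_eq_top (convex_P hPV)).1 ⟨0, h0⟩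
    have hvtop : vectorSpan ℝ P = ⊤ :=
      AffineSubspace.vectorSpan_eq_top_of_affineSpan_eq_top ℝ (Fin 2 → ℝ) (Fin 2 → ℝ) htop
    rw [hvtop, finrank_top, Module.finrank_fin_fun ℝ] at hrank1
    omega
  have hcpos : 0 < c := support_pos hPV h0 hu hb
  have hFclosed : IsClosed F := by
    rw [hFeq]
    have h : {p ∈ P | dotProd u p = c} = P ∩ (fun p => dotProd u p) ⁻¹' {c} := rfl
    rw [h]
    exact (closed_P hPV).inter (isClosed_singleton.preimage (continuous_dotProd u))
  have hFsubP : F ⊆ P := by rw [hFeq]; exact Set.sep_subset _ _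
  have hFcompact : IsCompact F :=
    (compact_P hPV).of_isClosed_subset hFclosed hFsubP
  have hne_bot : vectorSpan ℝ F ≠ ⊥ := by
    intro hbot; rw [hbot] at hrank1; simp at hrank1
  obtain ⟨d₀, hd₀mem, hd₀⟩ := Submodule.exists_mem_ne_zero_of_ne_bot hne_bot
  have hspan : vectorSpan ℝ F = Submodule.span ℝ {d₀} := by
    refine (Submodule.eq_of_le_of_finrank_le ?_ ?_).symm
    · rw [Submodule.span_le, Set.singleton_subset_iff]; exact hd₀mem
    · rw [hrank1, finrank_span_singleton hd₀]
  have hm : 0 < dotProd d₀ d₀ := dotProd_self_pos hd₀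
  have hparam : ∀ p ∈ F, ∀ q ∈ F, ∃ s : ℝ, p - q = s • d₀ := by
    intro p hp q hq
    have hv : p - q ∈ vectorSpan ℝ F := by
      have := vsub_mem_vectorSpan (k := ℝ) hp hq
      rwa [vsub_eq_sub] at this
    rw [hspan] at hv
    obtain ⟨s, hs⟩ := Submodule.mem_span_singleton.1 hv
    exact ⟨s, hs.symm⟩
  obtain ⟨v, hvF, hvmin⟩ := hFcompact.exists_isMinOn hFne (continuous_dotProd d₀).continuousOn
  obtain ⟨w, hwF, hwmax⟩ := hFcompact.exists_isMaxOn hFne (continuous_dotProd d₀).continuousOn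
  have hslope : ∀ p ∈ F, ∀ q ∈ F, ∀ s : ℝ, p - q = s • d₀ →
      dotProd d₀ p - dotProd d₀ q = s * dotProd d₀ d₀ := by
    intro p _ q _ s hs
    rw [← dotProd_sub_right, hs, dotProd_smul_right]
  have hvw : v ≠ w := by
    intro hvw
    apply hd₀
    have hFv : F = {v} := by
      apply Set.eq_singleton_iff_nonempty_unique_mem.2
      refine ⟨hFne, fun p hp => ?_⟩
      obtain ⟨s, hs⟩ := hparam p hp v hvF
      have h1 := hslope p hp v hvF s hs
      have h2 : dotProd d₀ v ≤ dotProd d₀ p := isMinOn_iff.1 hvmin p hp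
      have h3 : dotProd d₀ p ≤ dotProd d₀ w := isMaxOn_iff.1 hwmax p hp
      rw [← hvw] at h3
      have hs0 : s = 0 := by
        have h5 : s * dotProd d₀ d₀ = 0 := by linarith
        exact (mul_eq_zero.1 h5).resolve_right (ne_of_gt hm)
      rw [hs0, zero_smul, sub_eq_zero] at hs
      exact hs
    have hbot : vectorSpan ℝ F = ⊥ := by rw [hFv]; exact vectorSpan_singleton _ _
    rw [hbot] at hd₀mem
    exact (Submodule.mem_bot ℝ).1 hd₀mem
  obtain ⟨T, hT⟩ := hparam w hwF v hvF
  have hTslope := hslope w hwF v hvF T hT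
  have hTpos : 0 < T := by
    have h2 : dotProd d₀ v ≤ dotProd d₀ w := isMinOn_iff.1 hvmin w hwF
    have hTnn : 0 ≤ T := by nlinarith
    rcases lt_or_eq_of_le hTnn with h | h
    · exact h
    · exfalso
      rw [← h, zero_smul, sub_eq_zero] at hT
      exact hvw hT.symm
  -- parametrization from v with nonnegative coefficient, and from w with nonpositive
  have hparV : ∀ p ∈ F, ∃ s : ℝ, 0 ≤ s ∧ s ≤ T ∧ p = v + s • d₀ := by
    intro p hp
    obtain ⟨s, hs⟩ := hparam p hp v hvF
    have h1 := hslope p hp v hvF s hs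
    refine ⟨s, by nlinarith [isMinOn_iff.1 hvmin p hp], by nlinarith [isMaxOn_iff.1 hwmax p hp], ?_⟩
    rw [← hs]; abel
  have hseg : F = segment ℝ v w := by
    apply Set.Subset.antisymm
    · intro p hp
      obtain ⟨s, hs0, hsT, hp_eq⟩ := hparV p hp
      have hp_eq2 : p = v + (s / T) • (w - v) := by
        rw [hT, smul_smul, div_mul_cancel₀ _ (ne_of_gt hTpos)]
        exact hp_eq
      rw [hp_eq2, combo_eq]
      refine ⟨1 - s / T, s / T, ?_, by positivity, by ring, rfl⟩
      have : s / T ≤ 1 := (div_le_one hTpos).2 hsT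
      linarith
    · intro p hp
      rw [hFeq]
      have hv' : v ∈ {p ∈ P | dotProd u p = c} := hFeq ▸ hvF
      have hw' : w ∈ {p ∈ P | dotProd u p = c} := hFeq ▸ hwF
      obtain ⟨a, b, ha, hb', hab, rfl⟩ := hp
      constructor
      · exact (convex_P hPV) hv'.1 hw'.1 ha hb' hab
      · rw [dotProd_add_right, dotProd_smul_right, dotProd_smul_right, hv'.2, hw'.2]
        rw [← add_mul, hab, one_mul]
  have hvEP : v ∈ Set.extremePoints ℝ F := by
    apply endpoint_extreme hd₀ hvF
    intro p hp
    obtain ⟨s, hs0, _, hp_eq⟩ := hparV p hp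
    exact ⟨s, hs0, hp_eq⟩
  have hwEP : w ∈ Set.extremePoints ℝ F := by
    apply endpoint_extreme (neg_ne_zero.2 hd₀) hwF
    intro p hp
    obtain ⟨s, _, hsT, hp_eq⟩ := hparV p hp
    refine ⟨T - s, by linarith, ?_⟩
    have hw_eq : w = v + T • d₀ := by rw [← hT]; abel
    rw [hp_eq, hw_eq, smul_neg, sub_smul]
    abel
  have hEP : Set.extremePoints ℝ F = {v, w} := by
    apply Set.Subset.antisymm
    · intro z hz
      obtain ⟨s, hs0, hsT, hz_eq⟩ := hparV z hz.1
      by_contra hzvw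
      rw [Set.mem_insert_iff, Set.mem_singleton_iff] at hzvw
      push_neg at hzvw
      have hs0' : 0 < s := by
        rcases lt_or_eq_of_le hs0 with h | h
        · exact h
        · exfalso; apply hzvw.1; rw [hz_eq, ← h, zero_smul, add_zero]
      have hsT' : s < T := by
        rcases lt_or_eq_of_le hsT with h | h
        · exact h
        · exfalso; apply hzvw.2
          rw [hz_eq, h, ← hT]; abel
      have hzseg : z ∈ openSegment ℝ v w := by
        refine ⟨1 - s / T, s / T, ?_, by positivity, by ring, ?_⟩
        · have : s / T < 1 := (div_lt_one hTpos).2 hsT'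
          linarith
        · rw [← combo_eq, hT, smul_smul, div_mul_cancel₀ _ (ne_of_gt hTpos)]
          exact hz_eq.symm
      exact hzvw.1 ((hz.2 hvF hwF hzseg).symm)
    · intro z hz
      rcases hz with h | h
      · rw [h]; exact hvEP
      · rw [Set.mem_singleton_iff] at h; rw [h]; exact hwEP
  have hext : IsExtreme ℝ P F := by
    rw [hFeq]; exact face_isExtreme hb
  refine ⟨u, c, v, w, hu, hcpos, hb, hFeq, hvw, hvF, hwF, hseg, hEP, ?_, ?_⟩
  · exact hext.extremePoints_subset_extremePoints hvEP
  · exact hext.extremePoints_subset_extremePoints hwEP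

end Polytope

end DimTwoAux
namespace DimTwoAux

open Set

lemma latt_combo_sub {x y z : Fin 2 → ℝ} (hx : IsLatticePoint x) (hy : IsLatticePoint y)
    (hz : IsLatticePoint z) {a b : ℝ} (h : z = a • x + b • y) (m n : ℤ) :
    IsLatticePoint ((a - m) • x + (b - n) • y) := by
  have h1 : (a - m) • x + (b - n) • y = z - (((m : ℝ)) • x + ((n : ℝ)) • y) := by
    rw [h, sub_smul, sub_smul]; abel
  rw [h1]
  exact latt_sub hz (latt_add (latt_zsmul m hx) (latt_zsmul n hy))

/-- The fundamental-parallelepiped criterion for being a `ℤ`-basis. -/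
lemma basis_from_pair {x y : Fin 2 → ℝ} (hx : IsLatticePoint x) (hy : IsLatticePoint y)
    (hind : LinearIndependent ℝ ![x, y])
    (key : ∀ a b : ℝ, 0 ≤ a → a < 1 → 0 ≤ b → b < 1 →
      IsLatticePoint (a • x + b • y) → a = 0 ∧ b = 0) :
    IsZBasisFamily ![x, y] := by
  refine ⟨hind, ?_, ?_⟩
  · intro i; fin_cases i
    · simpa using hx
    · simpa using hy
  · intro z hz
    have hcard : Fintype.card (Fin 2) = Module.finrank ℝ (Fin 2 → ℝ) := by
      simp [Module.finrank_fin_fun]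
    set B := basisOfLinearIndependentOfCardEqFinrank hind hcard with hBdef
    have hB : ⇑B = ![x, y] := coe_basisOfLinearIndependentOfCardEqFinrank hind hcard
    set α := B.repr z 0 with hα
    set β := B.repr z 1 with hβ
    have hrepr : z = α • x + β • y := by
      have hsum := B.sum_repr z
      rw [Fin.sum_univ_two] at hsum
      rw [← hsum, hB]
      simp
      rfl
    set m := ⌊α⌋ with hm
    set n := ⌊β⌋ with hn
    have hfr : IsLatticePoint ((α - m) • x + (β - n) • y) :=
      latt_combo_sub hx hy hz hrepr m n
    have hαf : (m : ℝ) ≤ α := Int.floor_le α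
    have hαf2 : α < m + 1 := Int.lt_floor_add_one α
    have hβf : (n : ℝ) ≤ β := Int.floor_le β
    have hβf2 : β < n + 1 := Int.lt_floor_add_one β
    obtain ⟨ha0, hb0⟩ := key (α - m) (β - n) (by linarith) (by linarith) (by linarith)
      (by linarith) hfr
    refine ⟨![m, n], ?_⟩
    rw [Fin.sum_univ_two]
    simp only [Matrix.cons_val_zero, Matrix.cons_val_one, Matrix.head_cons]
    rw [hrepr]
    have h1 : α = (m : ℝ) := by linarith
    have h2 : β = (n : ℝ) := by linarith
    rw [h1, h2]

section Polytope

variable {P : Set (Fin 2 → ℝ)} {V : Finset (Fin 2 → ℝ)}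

lemma small_combo_interior (hPV : P = convexHull ℝ (V : Set (Fin 2 → ℝ)))
    (h0 : (0 : Fin 2 → ℝ) ∈ interior P) {x y : Fin 2 → ℝ} (hxP : x ∈ P) (hyP : y ∈ P)
    {a b : ℝ} (ha : 0 ≤ a) (hb : 0 ≤ b) (hab : a + b < 1) : a • x + b • y ∈ interior P := by
  rcases eq_or_lt_of_le (add_nonneg ha hb) with h | h
  · have ha0 : a = 0 := by linarith
    have hb0 : b = 0 := by linarith
    rw [ha0, hb0, zero_smul, zero_smul, add_zero]
    exact h0
  · set t := a + b with htdef
    have hm : (a / t) • x + (b / t) • y ∈ P :=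
      (convex_P hPV) hxP hyP (by positivity) (by positivity) (by field_simp; exact htdef.symm)
    have heq : t • ((a / t) • x + (b / t) • y) = a • x + b • y := by
      rw [smul_add, smul_smul, smul_smul]
      rw [mul_div_cancel₀ _ (ne_of_gt h), mul_div_cancel₀ _ (ne_of_gt h)]
    rw [← heq]
    exact smul_mem_interior hPV h0 hm (le_of_lt h) hab

lemma can_elim (hcan : IsCanonicalPolytope P) {z : Fin 2 → ℝ}
    (hz : z ∈ interior P) (hzl : IsLatticePoint z) : z = 0 := by
  have : z ∈ ({x ∈ interior P | IsLatticePoint x} : Set (Fin 2 → ℝ)) := ⟨hz, hzl⟩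
  rw [hcan] at this
  exact this

/-- Part 1 of the theorem. -/
lemma part1 (hPV : P = convexHull ℝ (V : Set (Fin 2 → ℝ)))
    (h0 : (0 : Fin 2 → ℝ) ∈ interior P) (hcan : IsCanonicalPolytope P)
    {x y : Fin 2 → ℝ} (hxf : x ∈ frontier P) (hyf : y ∈ frontier P)
    (hx : IsLatticePoint x) (hy : IsLatticePoint y)
    (hnf : ¬ SameFacet P x y) (hsum : x + y ≠ 0) : IsZBasisFamily ![x, y] := by
  have hxP : x ∈ P := frontier_subset_P hPV hxf
  have hyP : y ∈ P := frontier_subset_P hPV hyf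
  have hx0 : x ≠ 0 := frontier_ne_zero hPV h0 hxf
  have hy0 : y ≠ 0 := frontier_ne_zero hPV h0 hyf
  have hxy : x ≠ y := by
    intro h
    obtain ⟨F, hF, hxF⟩ := frontier_facet hPV h0 hxf
    exact hnf ⟨F, hF, hxF, h ▸ hxF⟩
  -- linear independence
  have hind : LinearIndependent ℝ ![x, y] := by
    rw [LinearIndependent.pair_iff]
    intro s t hst
    by_contra hcon
    have ht : t ≠ 0 := by
      intro ht0
      rw [ht0, zero_smul, add_zero, smul_eq_zero] at hst
      rcases hst with h | h
      · exact hcon ⟨h, ht0⟩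
      · exact hx0 h
    have hy_eq : y = (-s / t) • x := by
      have h1 : t • y = -(s • x) := by
        rw [eq_neg_iff_add_eq_zero, add_comm]; exact hst
      have h2 : y = t⁻¹ • (t • y) := by rw [smul_smul, inv_mul_cancel₀ ht, one_smul]
      rw [h2, h1, smul_neg, smul_smul]
      rw [← neg_smul]
      congr 1
      field_simp
    set lam := -s / t with hlam
    have hlam0 : lam ≠ 0 := by
      intro h
      rw [h, zero_smul] at hy_eq
      exact hy0 hy_eq
    rcases lt_trichotomy lam 0 with hneg | hzero | hpos
    · -- lam < 0
      set mu := -lam with hmu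
      have hmupos : 0 < mu := by rw [hmu]; linarith
      have hy_eq2 : y = -(mu • x) := by
        rw [hy_eq, hmu]; rw [neg_smul]; ring_nf
      rcases lt_trichotomy mu 1 with h1 | h1 | h1
      · -- -y = mu • x ∈ interior
        have hmem : mu • x ∈ interior P := smul_mem_interior hPV h0 hxP hmupos.le h1
        have hneg_y : -y = mu • x := by rw [hy_eq2]; abel
        have hl : IsLatticePoint (-y) := latt_neg hy
        have := can_elim hcan (hneg_y ▸ hmem) hl
        rw [neg_eq_zero] at this
        exact hy0 this
      · -- mu = 1 : y = -x
        apply hsum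
        rw [hy_eq2, h1, one_smul]; abel
      · -- mu > 1 : -x = mu⁻¹ • y ∈ interior
        have hx_eq : -x = mu⁻¹ • y := by
          rw [hy_eq2, smul_neg, smul_smul, inv_mul_cancel₀ (ne_of_gt hmupos), one_smul]
        have hmem : mu⁻¹ • y ∈ interior P := by
          apply smul_mem_interior hPV h0 hyP (by positivity)
          rw [inv_lt_one_iff₀]; right; exact h1
        have hl : IsLatticePoint (-x) := latt_neg hx
        have := can_elim hcan (hx_eq ▸ hmem) hl
        rw [neg_eq_zero] at this
        exact hx0 this
    · exact hlam0 hzero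
    · -- lam > 0
      rcases lt_trichotomy lam 1 with h1 | h1 | h1
      · have hmem : lam • x ∈ interior P := smul_mem_interior hPV h0 hxP hpos.le h1
        rw [← hy_eq] at hmem
        exact frontier_not_interior hPV hyf hmem
      · apply hxy
        rw [hy_eq, h1, one_smul]
      · have hx_eq : x = lam⁻¹ • y := by
          rw [hy_eq, smul_smul, inv_mul_cancel₀ hlam0, one_smul]
        have hmem : lam⁻¹ • y ∈ interior P := by
          apply smul_mem_interior hPV h0 hyP (by positivity)
          rw [inv_lt_one_iff₀]; right; exact h1
        rw [← hx_eq] at hmem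
        exact frontier_not_interior hPV hxf hmem
  -- the parallelepiped condition
  apply basis_from_pair hx hy hind
  intro a b ha ha1 hb hb1 hlatt
  rcases lt_trichotomy (a + b) 1 with hab | hab | hab
  · have hmem : a • x + b • y ∈ interior P := small_combo_interior hPV h0 hxP hyP ha hb hab
    have := can_elim hcan hmem hlatt
    exact hind.eq_zero_of_pair this
  · -- a + b = 1 : impossible
    exfalso
    have ha' : 0 < a := by
      rcases lt_or_eq_of_le ha with h | h
      · exact h
      · exfalso; rw [← h] at hab; linarith
    have hb' : 0 < b := by
      rcases lt_or_eq_of_le hb with h | h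
      · exact h
      · exfalso; rw [← h] at hab; linarith
    set z := a • x + b • y with hz
    have hzP : z ∈ P := (convex_P hPV) hxP hyP ha'.le hb'.le hab
    by_cases hzi : z ∈ interior P
    · have := can_elim hcan hzi hlatt
      have h2 := hind.eq_zero_of_pair this
      linarith [h2.1]
    · have hzf : z ∈ frontier P := by
        rw [(closed_P hPV).frontier_eq]; exact ⟨hzP, hzi⟩
      exact hnf (sameFacet_of_frontier_seg hPV h0 hxP hyP hxy ⟨a, b, ha', hb', hab, rfl⟩ hzf)
  · -- a + b > 1 : impossible
    exfalso
    have hlatt' : IsLatticePoint ((1 - a) • x + (1 - b) • y) := by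
      have h1 : (1 - a) • x + (1 - b) • y = (x + y) - (a • x + b • y) := by
        rw [sub_smul, sub_smul, one_smul, one_smul]; abel
      rw [h1]
      exact latt_sub (latt_add hx hy) hlatt
    have hmem : (1 - a) • x + (1 - b) • y ∈ interior P :=
      small_combo_interior hPV h0 hxP hyP (by linarith) (by linarith) (by linarith)
    have := can_elim hcan hmem hlatt'
    have h2 := hind.eq_zero_of_pair this
    linarith [h2.1]

end Polytope

end DimTwoAux
namespace DimTwoAux

open Set

section Polytope

variable {P : Set (Fin 2 → ℝ)} {V : Finset (Fin 2 → ℝ)}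

lemma term_elim (hterm : IsTerminalPolytope P) {z : Fin 2 → ℝ} (hz : z ∈ P)
    (hzl : IsLatticePoint z) : z = 0 ∨ z ∈ Set.extremePoints ℝ P := by
  have h : z ∈ ({x ∈ P | IsLatticePoint x} : Set (Fin 2 → ℝ)) := ⟨hz, hzl⟩
  rw [hterm] at h
  exact h

lemma extreme_ray_zero (h0 : (0 : Fin 2 → ℝ) ∈ interior P) {z m : Fin 2 → ℝ}
    (hz : z ∈ Set.extremePoints ℝ P) (hm : m ∈ P) {t : ℝ} (ht0 : 0 < t) (ht1 : t < 1)
    (heq : z = t • m) : z = 0 := by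
  have h0Q : (0 : Fin 2 → ℝ) ∈ P := interior_subset h0
  have hseg : z ∈ openSegment ℝ (0 : Fin 2 → ℝ) m :=
    ⟨1 - t, t, by linarith, ht0, by ring, by rw [smul_zero, zero_add, ← heq]⟩
  exact (hz.2 h0Q hm hseg).symm

lemma term_combo_zero (hPV : P = convexHull ℝ (V : Set (Fin 2 → ℝ)))
    (h0 : (0 : Fin 2 → ℝ) ∈ interior P) (hterm : IsTerminalPolytope P)
    {v w : Fin 2 → ℝ} (hvQ : v ∈ P) (hwQ : w ∈ P) {a b : ℝ}
    (ha : 0 ≤ a) (hb : 0 ≤ b) (hab : a + b < 1)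
    (hlatt : IsLatticePoint (a • v + b • w)) : a • v + b • w = 0 := by
  rcases eq_or_lt_of_le (add_nonneg ha hb) with h | h
  · have ha0 : a = 0 := by linarith
    have hb0 : b = 0 := by linarith
    rw [ha0, hb0, zero_smul, zero_smul, add_zero]
  · set t := a + b with htdef
    have hm : (a / t) • v + (b / t) • w ∈ P :=
      (convex_P hPV) hvQ hwQ (by positivity) (by positivity) (by field_simp; exact htdef.symm)
    have heq : a • v + b • w = t • ((a / t) • v + (b / t) • w) := by
      rw [smul_add, smul_smul, smul_smul]
      rw [mul_div_cancel₀ _ (ne_of_gt h), mul_div_cancel₀ _ (ne_of_gt h)]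
    have hzQ : a • v + b • w ∈ P := by
      rw [heq]
      exact interior_subset (smul_mem_interior hPV h0 hm h.le hab)
    rcases term_elim hterm hzQ hlatt with h1 | h1
    · exact h1
    · exact extreme_ray_zero h0 h1 hm h hab heq

end Polytope

/-- Part 2 of the theorem: terminal Fano polygons are smooth. -/
lemma part2 (Q : Set (Fin 2 → ℝ)) (hFano : IsFanoPolytope Q)
    (hterm : IsTerminalPolytope Q) : IsSmoothPolytope Q := by
  obtain ⟨⟨V, hVlat, hQV⟩, h0, hvert⟩ := hFano
  intro F hF
  obtain ⟨u, c, v, w, hu, hcpos, hb, hFeq, hvw, hvF, hwF, hseg, hEP, hvP, hwP⟩ :=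
    facet_struct hQV h0 hF
  have hvQ : v ∈ Q := (hFeq ▸ hvF).1
  have hwQ : w ∈ Q := (hFeq ▸ hwF).1
  have hvc : dotProd u v = c := (hFeq ▸ hvF).2
  have hwc : dotProd u w = c := (hFeq ▸ hwF).2
  have hvlat : IsLatticePoint v := (hvert v hvP).1
  have hwlat : IsLatticePoint w := (hvert w hwP).1
  have hind : LinearIndependent ℝ ![v, w] := by
    rw [LinearIndependent.pair_iff]
    intro s t hst
    have h1 : dotProd u (s • v + t • w) = 0 := by rw [hst, dotProd_zero_right]
    rw [dotProd_add_right, dotProd_smul_right, dotProd_smul_right, hvc, hwc] at h1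
    have hts : t = -s := by
      have : (s + t) * c = 0 := by ring_nf; ring_nf at h1; linarith
      have h2 : s + t = 0 := by
        rcases mul_eq_zero.1 this with h | h
        · exact h
        · exact absurd h (ne_of_gt hcpos)
      linarith
    rw [hts, neg_smul, ← sub_eq_add_neg, ← smul_sub] at hst
    rcases smul_eq_zero.1 hst with h | h
    · constructor
      · exact h
      · rw [hts, h, neg_zero]
    · exfalso; exact hvw (by rwa [sub_eq_zero] at h)
  refine ⟨![v, w], ?_, ?_⟩
  · rw [hEP]
    ext z
    simp only [Set.mem_insert_iff, Set.mem_singleton_iff, Set.mem_range]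
    constructor
    · rintro (h | h)
      · exact ⟨0, by simp [h.symm]⟩
      · exact ⟨1, by simp [h.symm]⟩
    · rintro ⟨i, hi⟩
      fin_cases i
      · left; simpa using hi.symm
      · right; simpa using hi.symm
  · apply basis_from_pair hvlat hwlat hind
    intro a b ha ha1 hb' hb1 hlatt
    rcases lt_trichotomy (a + b) 1 with hab | hab | hab
    · have := term_combo_zero hQV h0 hterm hvQ hwQ ha hb' hab hlatt
      exact hind.eq_zero_of_pair this
    · exfalso
      have ha' : 0 < a := by
        rcases lt_or_eq_of_le ha with h | h
        · exact h
        · exfalso; rw [← h] at hab; linarith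
      have hb'' : 0 < b := by
        rcases lt_or_eq_of_le hb' with h | h
        · exact h
        · exfalso; rw [← h] at hab; linarith
      set z := a • v + b • w with hz
      have hzF : z ∈ F := by
        rw [hseg]; exact ⟨a, b, ha'.le, hb''.le, hab, rfl⟩
      have hzQ : z ∈ Q := (hFeq ▸ hzF).1
      rcases term_elim hterm hzQ hlatt with h1 | h1
      · have h2 := hind.eq_zero_of_pair h1
        linarith [h2.1]
      · have hzseg : z ∈ openSegment ℝ v w := ⟨a, b, ha', hb'', hab, rfl⟩
        exact hvw ((h1.2 hvQ hwQ hzseg).trans (h1.2 hwQ hvQ (by rw [openSegment_symm]; exact hzseg)).symm)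
    · exfalso
      have hlatt' : IsLatticePoint ((1 - a) • v + (1 - b) • w) := by
        have h1 : (1 - a) • v + (1 - b) • w = (v + w) - (a • v + b • w) := by
          rw [sub_smul, sub_smul, one_smul, one_smul]; abel
        rw [h1]
        exact latt_sub (latt_add hvlat hwlat) hlatt
      have := term_combo_zero hQV h0 hterm hvQ hwQ (a := 1 - a) (b := 1 - b)
        (by linarith) (by linarith) (by linarith) hlatt'
      have h2 := hind.eq_zero_of_pair this
      linarith [h2.1]

end DimTwoAux
namespace DimTwoAux

open Set

lemma dotProd_single {d : ℕ} (y : Fin d → ℝ) (i : Fin d) :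
    dotProd y (Pi.single i 1) = y i := by
  unfold dotProd
  rw [Finset.sum_eq_single i]
  · simp
  · intro j _ hj
    simp [Pi.single_apply, hj]
  · simp

lemma dotProd_neg_right {d : ℕ} (u x : Fin d → ℝ) : dotProd u (-x) = -dotProd u x :=
  (dotL u).map_neg x

/-- Representation of continuous linear functionals by vectors. -/
lemma clm_rep (f : (Fin 2 → ℝ) →L[ℝ] ℝ) : ∃ u : Fin 2 → ℝ, ∀ p, dotProd u p = f p := by
  refine ⟨fun i => f (fun j => if i = j then 1 else 0), fun p => ?_⟩
  conv_rhs => rw [pi_eq_sum_univ p]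
  rw [map_sum]
  unfold dotProd
  exact Finset.sum_congr rfl fun i _ => by rw [map_smul, smul_eq_mul, mul_comm]

lemma indep_of_face_pair {u : Fin 2 → ℝ} {c : ℝ} (hcpos : 0 < c) {v w : Fin 2 → ℝ}
    (hvw : v ≠ w) (hvc : dotProd u v = c) (hwc : dotProd u w = c) :
    LinearIndependent ℝ ![v, w] := by
  rw [LinearIndependent.pair_iff]
  intro s t hst
  have h1 : dotProd u (s • v + t • w) = 0 := by rw [hst, dotProd_zero_right]
  rw [dotProd_add_right, dotProd_smul_right, dotProd_smul_right, hvc, hwc] at h1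
  have hts : t = -s := by
    have h3 : (s + t) * c = 0 := by ring_nf; ring_nf at h1; linarith
    have h2 : s + t = 0 := by
      rcases mul_eq_zero.1 h3 with h | h
      · exact h
      · exact absurd h (ne_of_gt hcpos)
    linarith
  rw [hts, neg_smul, ← sub_eq_add_neg, ← smul_sub] at hst
  rcases smul_eq_zero.1 hst with h | h
  · exact ⟨h, by rw [hts, h, neg_zero]⟩
  · exact absurd (by rwa [sub_eq_zero] at h) hvw

section Polytope

variable {P : Set (Fin 2 → ℝ)} {V : Finset (Fin 2 → ℝ)}

/-- For every facet of a canonical Fano polygon there is an integral functional which is `1`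
on the facet and at most `1` on the polygon. -/
lemma facet_one (hPV : P = convexHull ℝ (V : Set (Fin 2 → ℝ)))
    (h0 : (0 : Fin 2 → ℝ) ∈ interior P) (hcan : IsCanonicalPolytope P)
    (hvert : ∀ v ∈ Set.extremePoints ℝ P, IsPrimitivePoint v)
    {F : Set (Fin 2 → ℝ)} (hF : IsFacet P F) :
    ∃ u' : Fin 2 → ℝ, IsLatticePoint u' ∧ (∀ p ∈ P, dotProd u' p ≤ 1) ∧
      (∀ p ∈ F, dotProd u' p = 1) := by
  obtain ⟨u, c, v, w, hu, hcpos, hb, hFeq, hvw, hvF, hwF, hseg, hEP, hvP, hwP⟩ :=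
    facet_struct hPV h0 hF
  have hvQ : v ∈ P := (hFeq ▸ hvF).1
  have hvc : dotProd u v = c := (hFeq ▸ hvF).2
  have hvlat : IsLatticePoint v := (hvert v hvP).1
  have hwlat : IsLatticePoint w := (hvert w hwP).1
  -- the lattice point on the facet closest to v
  have hFbdd : Bornology.IsBounded (segment ℝ v w) := by
    rw [← hseg]
    exact ((compact_P hPV).isBounded).subset (by rw [hFeq]; exact Set.sep_subset _ _)
  set L : Set (Fin 2 → ℝ) := {p ∈ segment ℝ v w | IsLatticePoint p ∧ p ≠ v} with hLdef
  have hLfin : L.Finite := by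
    apply Set.Finite.subset (latt_bounded_finite hFbdd)
    rintro p ⟨h1, h2, _⟩
    exact ⟨h1, h2⟩
  have hLne : L.Nonempty := ⟨w, right_mem_segment ℝ v w, hwlat, hvw.symm⟩
  obtain ⟨p₁, hp₁L, hp₁min⟩ := Set.exists_min_image L (fun p => ‖p - v‖) hLfin hLne
  obtain ⟨hp₁seg, hp₁lat, hp₁v⟩ := hp₁L
  have hp₁F : p₁ ∈ F := hseg ▸ hp₁seg
  have hp₁Q : p₁ ∈ P := (hFeq ▸ hp₁F).1
  have hp₁c : dotProd u p₁ = c := (hFeq ▸ hp₁F).2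
  -- no lattice point strictly between v and p₁
  have hngap : ∀ q ∈ openSegment ℝ v p₁, ¬ IsLatticePoint q := by
    rintro q ⟨a, b, ha, hb', hab, rfl⟩ hqlat
    have hq_sub : a • v + b • p₁ - v = b • (p₁ - v) := by
      have h1 : a = 1 - b := by linarith
      rw [h1, sub_smul, one_smul, smul_sub]; abel
    have hqseg : a • v + b • p₁ ∈ segment ℝ v w :=
      (convex_segment v w).openSegment_subset (left_mem_segment ℝ v w) hp₁seg
        ⟨a, b, ha, hb', hab, rfl⟩
    have hqv : a • v + b • p₁ ≠ v := by
      intro h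
      have h2 : b • (p₁ - v) = 0 := by rw [← hq_sub, h, sub_self]
      rcases smul_eq_zero.1 h2 with h3 | h3
      · linarith
      · exact hp₁v (by rwa [sub_eq_zero] at h3)
    have hlt : ‖a • v + b • p₁ - v‖ < ‖p₁ - v‖ := by
      rw [hq_sub, norm_smul, Real.norm_eq_abs, abs_of_pos hb']
      have hpos : 0 < ‖p₁ - v‖ := by
        rw [norm_pos_iff, sub_ne_zero]; exact hp₁v
      nlinarith
    have := hp₁min _ ⟨hqseg, hqlat, hqv⟩
    linarith
  -- v, p₁ are a ℤ-basis
  have hind : LinearIndependent ℝ ![v, p₁] := indep_of_face_pair hcpos hp₁v.symm hvc hp₁c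
  have hbasis : IsZBasisFamily ![v, p₁] := by
    apply basis_from_pair hvlat hp₁lat hind
    intro a b ha ha1 hb' hb1 hlatt
    rcases lt_trichotomy (a + b) 1 with hab | hab | hab
    · have hmem : a • v + b • p₁ ∈ interior P :=
        small_combo_interior hPV h0 hvQ hp₁Q ha hb' hab
      exact hind.eq_zero_of_pair (can_elim hcan hmem hlatt)
    · exfalso
      have ha' : 0 < a := by
        rcases lt_or_eq_of_le ha with h | h
        · exact h
        · exfalso; rw [← h] at hab; linarith
      have hb'' : 0 < b := by
        rcases lt_or_eq_of_le hb' with h | h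
        · exact h
        · exfalso; rw [← h] at hab; linarith
      exact hngap _ ⟨a, b, ha', hb'', hab, rfl⟩ hlatt
    · exfalso
      have hlatt' : IsLatticePoint ((1 - a) • v + (1 - b) • p₁) := by
        have h1 : (1 - a) • v + (1 - b) • p₁ = (v + p₁) - (a • v + b • p₁) := by
          rw [sub_smul, sub_smul, one_smul, one_smul]; abel
        rw [h1]
        exact latt_sub (latt_add hvlat hp₁lat) hlatt
      have hmem : (1 - a) • v + (1 - b) • p₁ ∈ interior P :=
        small_combo_interior hPV h0 hvQ hp₁Q (by linarith) (by linarith) (by linarith)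
      have := hind.eq_zero_of_pair (can_elim hcan hmem hlatt')
      linarith [this.1]
  -- dual functional
  have hcard : Fintype.card (Fin 2) = Module.finrank ℝ (Fin 2 → ℝ) := by
    simp [Module.finrank_fin_fun]
  set B := basisOfLinearIndependentOfCardEqFinrank hind hcard with hBdef
  have hB : ⇑B = ![v, p₁] := coe_basisOfLinearIndependentOfCardEqFinrank hind hcard
  have hB0 : B 0 = v := by rw [hB]; simp
  have hB1 : B 1 = p₁ := by rw [hB]; simp
  set Φ : (Fin 2 → ℝ) →ₗ[ℝ] (Fin 2 → ℝ) := LinearMap.pi (fun i => dotL (B i)) with hΦ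
  have hΦinj : Function.Injective Φ := by
    rw [← LinearMap.ker_eq_bot]
    rw [Submodule.eq_bot_iff]
    intro q hq
    rw [LinearMap.mem_ker] at hq
    have hqi : ∀ i, dotProd (B i) q = 0 := by
      intro i
      have := congrFun hq i
      simpa [hΦ, LinearMap.pi_apply, dotL_apply] using this
    have hqq : dotProd q q = 0 := by
      have hrep := B.sum_repr q
      rw [Fin.sum_univ_two] at hrep
      calc dotProd q q = dotProd (B.repr q 0 • B 0 + B.repr q 1 • B 1) q := by rw [hrep]
        _ = B.repr q 0 * dotProd (B 0) q + B.repr q 1 * dotProd (B 1) q := by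
            rw [dotProd_add_left, dotProd_smul_left, dotProd_smul_left]
        _ = 0 := by rw [hqi 0, hqi 1]; ring
    by_contra hq0
    exact (ne_of_gt (dotProd_self_pos hq0)) hqq
  have hΦsurj : Function.Surjective Φ := (LinearMap.injective_iff_surjective).1 hΦinj
  obtain ⟨u', hu'⟩ := hΦsurj (fun _ => 1)
  have hu'v : dotProd u' v = 1 := by
    have := congrFun hu' 0
    rw [hΦ] at this
    simp only [LinearMap.pi_apply, dotL_apply] at this
    rw [hB0] at this
    rw [dotProd_comm]; exact this
  have hu'p₁ : dotProd u' p₁ = 1 := by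
    have := congrFun hu' 1
    rw [hΦ] at this
    simp only [LinearMap.pi_apply, dotL_apply] at this
    rw [hB1] at this
    rw [dotProd_comm]; exact this
  -- integrality
  have hu'lat : IsLatticePoint u' := by
    intro i
    obtain ⟨cf, hcf⟩ := hbasis.2.2 (Pi.single i 1) (by
      intro j
      by_cases h : j = i
      · exact ⟨1, by subst h; simp⟩
      · exact ⟨0, by simp [Pi.single_apply, h]⟩)
    refine ⟨cf 0 + cf 1, ?_⟩
    have h1 : u' i = dotProd u' (Pi.single i 1) := (dotProd_single u' i).symm
    rw [h1, hcf, Fin.sum_univ_two]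
    simp only [Matrix.cons_val_zero, Matrix.cons_val_one, Matrix.head_cons]
    rw [dotProd_add_right, dotProd_smul_right, dotProd_smul_right, hu'v, hu'p₁]
    push_cast
    ring
  -- u' = c⁻¹ • u as functionals
  have hfun : ∀ p : Fin 2 → ℝ, dotProd u' p = c⁻¹ * dotProd u p := by
    have heq : dotL u' = dotL (c⁻¹ • u) := by
      apply B.ext
      intro i
      fin_cases i
      · show dotL u' (B 0) = dotL (c⁻¹ • u) (B 0)
        rw [hB0, dotL_apply, dotL_apply, dotProd_smul_left, hvc, hu'v,
          inv_mul_cancel₀ (ne_of_gt hcpos)]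
      · show dotL u' (B 1) = dotL (c⁻¹ • u) (B 1)
        rw [hB1, dotL_apply, dotL_apply, dotProd_smul_left, hp₁c, hu'p₁,
          inv_mul_cancel₀ (ne_of_gt hcpos)]
    intro p
    have := LinearMap.congr_fun heq p
    rw [dotL_apply, dotL_apply, dotProd_smul_left] at this
    exact this
  refine ⟨u', hu'lat, ?_, ?_⟩
  · intro p hp
    rw [hfun p]
    have := hb p hp
    calc c⁻¹ * dotProd u p ≤ c⁻¹ * c :=
          mul_le_mul_of_nonneg_left this (by positivity)
      _ = 1 := inv_mul_cancel₀ (ne_of_gt hcpos)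
  · intro p hp
    have hp' : p ∈ P ∧ dotProd u p = c := by rw [hFeq] at hp; exact hp
    rw [hfun p, hp'.2, inv_mul_cancel₀ (ne_of_gt hcpos)]

end Polytope

end DimTwoAux
namespace DimTwoAux

open Set

/-- Part 3 of the theorem: canonical Fano polygons are reflexive. -/
lemma part3 (Q : Set (Fin 2 → ℝ)) (hFano : IsFanoPolytope Q)
    (hcan : IsCanonicalPolytope Q) : IsReflexive Q := by
  obtain ⟨⟨V, hVlat, hQV⟩, h0, hvert⟩ := hFano
  refine ⟨⟨V, hVlat, hQV⟩, h0, ?_⟩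
  obtain ⟨ε, hε, hball⟩ := Metric.isOpen_iff.1 isOpen_interior 0 h0
  set U : Set (Fin 2 → ℝ) := {y | IsLatticePoint y ∧ (∀ p ∈ Q, dotProd y p ≤ 1) ∧
      ∃ F, IsFacet Q F ∧ ∀ p ∈ F, dotProd y p = 1} with hUdef
  -- U is finite
  have hpolar_bdd : Bornology.IsBounded {y : Fin 2 → ℝ | ∀ p ∈ Q, dotProd y p ≤ 1} := by
    rw [isBounded_iff_forall_norm_le]
    refine ⟨2 / ε, fun y hy => ?_⟩
    rw [pi_norm_le_iff_of_nonneg (by positivity)]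
    intro i
    have hgen : ∀ t : ℝ, |t| < ε → t * y i ≤ 1 := by
      intro t ht
      have hpQ : t • (Pi.single i 1 : Fin 2 → ℝ) ∈ Q := by
        refine interior_subset (hball ?_)
        rw [mem_ball_zero_iff, norm_smul, Pi.norm_single, Real.norm_eq_abs]
        simpa using ht
      have := hy _ hpQ
      rwa [dotProd_comm, dotProd_smul_left, dotProd_comm, dotProd_single] at this
    have h1 := hgen (ε / 2) (by rw [abs_of_pos (by positivity)]; linarith)
    have h2 := hgen (-(ε / 2)) (by rw [abs_neg, abs_of_pos (by positivity)]; linarith)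
    rw [Real.norm_eq_abs, abs_le]
    constructor
    · have hle : -y i * ε ≤ 2 := by nlinarith
      have h3 : -y i ≤ 2 / ε := by rw [le_div_iff₀ hε]; exact hle
      linarith
    · have hle : y i * ε ≤ 2 := by nlinarith
      rw [le_div_iff₀ hε]
      exact hle
  have hUfin : U.Finite := by
    apply Set.Finite.subset (latt_bounded_finite hpolar_bdd)
    rintro y ⟨h1, h2, _⟩
    exact ⟨h2, h1⟩
  set WS : Set (Fin 2 → ℝ) := (fun y => -y) '' U with hWSdef
  have hWSfin : WS.Finite := hUfin.image _
  set Wfin : Finset (Fin 2 → ℝ) := hWSfin.toFinset with hWfin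
  have hWcoe : (Wfin : Set (Fin 2 → ℝ)) = WS := hWSfin.coe_toFinset
  -- every facet has an element of U
  have hfacetU : ∀ F, IsFacet Q F → ∃ u₁ ∈ U, ∀ p ∈ F, dotProd u₁ p = 1 := by
    intro F hF
    obtain ⟨u₁, hu₁lat, hu₁bd, hu₁eq⟩ := facet_one hQV h0 hcan hvert hF
    exact ⟨u₁, ⟨hu₁lat, hu₁bd, F, hF, hu₁eq⟩, hu₁eq⟩
  -- U is nonempty
  have hUne : U.Nonempty := by
    have hne : (Pi.single 0 (1:ℝ) : Fin 2 → ℝ) ≠ 0 := by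
      intro h
      have := congrFun h 0
      simp at this
    obtain ⟨t, ht, hxf⟩ := ray_frontier hQV h0 hne
    obtain ⟨F₀, hF₀, _⟩ := frontier_facet hQV h0 hxf
    obtain ⟨u₀, hu₀U, _⟩ := hfacetU F₀ hF₀
    exact ⟨u₀, hu₀U⟩
  -- the dual polytope equals the convex hull of WS
  have hdual : dualPolytope Q = convexHull ℝ (Wfin : Set (Fin 2 → ℝ)) := by
    rw [hWcoe]
    apply Set.Subset.antisymm
    · -- hard direction
      intro y hy
      by_contra hynot
      have hWcl : IsClosed (convexHull ℝ WS) := (hWSfin.isCompact_convexHull ℝ).isClosed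
      obtain ⟨f, B, hfa, hBy⟩ :=
        geometric_hahn_banach_closed_point (convex_convexHull ℝ WS) hWcl hynot
      obtain ⟨p, hp⟩ := clm_rep f
      set q : Fin 2 → ℝ := -p with hqdef
      have hnegmem : ∀ u₁ ∈ U, -u₁ ∈ convexHull ℝ WS :=
        fun u₁ h => subset_convexHull ℝ WS ⟨u₁, h, rfl⟩
      have hq0 : q ≠ 0 := by
        intro hq
        have hp0 : p = 0 := by rwa [hqdef, neg_eq_zero] at hq
        obtain ⟨u₀, hu₀U⟩ := hUne
        have h1 := hfa _ (hnegmem u₀ hu₀U)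
        rw [← hp, hp0, dotProd_zero_left] at h1
        rw [← hp, hp0, dotProd_zero_left] at hBy
        linarith
      obtain ⟨t, ht, hxf⟩ := ray_frontier hQV h0 hq0
      obtain ⟨F₁, hF₁, hxF₁⟩ := frontier_facet hQV h0 hxf
      obtain ⟨u₁, hu₁U, hu₁eq⟩ := hfacetU F₁ hF₁
      have h1 : dotProd u₁ (t • q) = 1 := hu₁eq _ hxF₁
      rw [dotProd_smul_right] at h1
      have hqu₁ : dotProd u₁ q = 1 / t := by
        field_simp at h1 ⊢
        linarith
      -- dotProd u₁ q < B
      have hfu₁ : f (-u₁) < B := hfa _ (hnegmem u₁ hu₁U)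
      rw [← hp, dotProd_neg_right] at hfu₁
      have hqu₁B : dotProd u₁ q < B := by
        rw [dotProd_comm, hqdef]
        have : dotProd (-p) u₁ = -(dotProd p u₁) := by
          rw [dotProd_comm, dotProd_neg_right, dotProd_comm]
        rw [this]
        linarith
      have hBpos : 0 < B := lt_trans (by rw [hqu₁] at hqu₁B ⊢; positivity) hqu₁B
      -- dotProd q (-y) > B
      have hfy : B < f y := hBy
      rw [← hp] at hfy
      have hqy : B < dotProd q (-y) := by
        rw [hqdef, dotProd_comm, dotProd_neg_right, dotProd_comm, dotProd_neg_right, neg_neg]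
        exact hfy
      -- conclude
      have hxQ : t • q ∈ Q := frontier_subset_P hQV hxf
      have hyval := hy _ hxQ
      have hfinal : 1 < dotProd (t • q) (-y) := by
        rw [dotProd_comm, dotProd_smul_right]
        have h2 : t * B < t * dotProd (-y) q := by
          apply mul_lt_mul_of_pos_left ?_ ht
          rw [dotProd_comm]; exact hqy
        have h3 : 1 < t * B := by
          have h4 : 1 / t < B := by rw [← hqu₁]; exact hqu₁B
          rw [div_lt_iff₀ ht] at h4
          linarith [h4]
        linarith
      rw [dotProd_neg_right] at hfinal
      linarith
    · -- easy direction
      apply convexHull_min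
      · rintro z ⟨u₁, hu₁U, rfl⟩
        intro x hx
        rw [dotProd_neg_right]
        have := hu₁U.2.1 x hx
        rw [dotProd_comm] at this
        linarith
      · -- dualPolytope is convex
        intro y₁ hy₁ y₂ hy₂ a b ha hb hab
        intro x hx
        rw [dotProd_add_right, dotProd_smul_right, dotProd_smul_right]
        have h1 := hy₁ x hx
        have h2 := hy₂ x hx
        nlinarith [mul_le_mul_of_nonneg_left h1 ha, mul_le_mul_of_nonneg_left h2 hb]
  refine ⟨Wfin, ?_, hdual⟩
  intro w hw
  have : w ∈ WS := by rwa [← hWcoe]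
  obtain ⟨u₁, hu₁U, rfl⟩ := this
  exact latt_neg hu₁U.1

end DimTwoAux
/-- In a two-dimensional canonical Fano polytope, two boundary lattice points
not lying in a common facet and not opposite form a `ℤ`-basis of `ℤ²`; consequently every
two-dimensional terminal Fano polytope is smooth, and every two-dimensional canonical Fano
polytope is reflexive. -/
theorem dim_two_basis_lemma (P : Set (Fin 2 → ℝ))
    (hFano : IsFanoPolytope P) (hcan : IsCanonicalPolytope P) :
    (∀ x y : Fin 2 → ℝ, x ∈ frontier P → y ∈ frontier P →
      IsLatticePoint x → IsLatticePoint y →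
      ¬ SameFacet P x y → x + y ≠ 0 → IsZBasisFamily ![x, y]) ∧
    (∀ Q : Set (Fin 2 → ℝ), IsFanoPolytope Q → IsTerminalPolytope Q → IsSmoothPolytope Q) ∧
    (∀ Q : Set (Fin 2 → ℝ), IsFanoPolytope Q → IsCanonicalPolytope Q → IsReflexive Q) := by
  obtain ⟨⟨V, hVlat, hPV⟩, h0, hvert⟩ := hFano
  refine ⟨?_, ?_, ?_⟩
  · intro x y hxf hyf hx hy hnf hsum
    exact DimTwoAux.part1 hPV h0 hcan hxf hyf hx hy hnf hsum
  · intro Q hQ hterm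
    exact DimTwoAux.part2 Q hQ hterm
  · intro Q hQ hc
    exact DimTwoAux.part3 Q hQ hc

end
end

section
/- Let P ⊆ ℝ³ be a three-dimensional reflexive polytope. Three lattice points x, y, z lying in a common facet of P form a ℤ-basis of ℤ³ if and only if the triangle conv(x, y, z) is two-dimensional and empty (its only lattice points are x, y, z). Consequently, every three-dimensional simplicial terminal reflexive polytope is a smooth Fano polytope. -/
open scoped BigOperators

noncomputable section

namespace Aux

lemma dot_comm {d : ℕ} (x y : Fin d → ℝ) : dotProd x y = dotProd y x := by
  simp [dotProd, mul_comm]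

lemma dot_linear {d : ℕ} (u : Fin d → ℝ) : IsLinearMap ℝ (fun x => dotProd u x) := by
  constructor
  · intro a b; simp [dotProd, mul_add, Finset.sum_add_distrib]
  · intro c a; simp [dotProd, Finset.mul_sum, mul_left_comm]

lemma dot_add {d : ℕ} (u x y : Fin d → ℝ) : dotProd u (x + y) = dotProd u x + dotProd u y :=
  (dot_linear u).map_add x y

lemma dot_smul {d : ℕ} (u : Fin d → ℝ) (c : ℝ) (x : Fin d → ℝ) :
    dotProd u (c • x) = c * dotProd u x := (dot_linear u).map_smul c x

lemma dot_zero {d : ℕ} (u : Fin d → ℝ) : dotProd u (0 : Fin d → ℝ) = 0 := by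
  simp [dotProd]

lemma dot_zero_left {d : ℕ} (u : Fin d → ℝ) : dotProd (0 : Fin d → ℝ) u = 0 := by
  simp [dotProd]

lemma dot_smul_left {d : ℕ} (c : ℝ) (x y : Fin d → ℝ) :
    dotProd (c • x) y = c * dotProd x y := by
  rw [dot_comm, dot_smul, dot_comm]

lemma dot_sum {d : ℕ} (v : Fin d → ℝ) {ι : Type*} (s : Finset ι) (f : ι → Fin d → ℝ) :
    dotProd v (∑ i ∈ s, f i) = ∑ i ∈ s, dotProd v (f i) := by
  simp only [dotProd, Finset.sum_apply, Finset.mul_sum]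
  exact Finset.sum_comm

lemma dot_sub {d : ℕ} (u x y : Fin d → ℝ) : dotProd u (x - y) = dotProd u x - dotProd u y := by
  simp [dotProd, mul_sub, Finset.sum_sub_distrib]

lemma dot_self_pos {d : ℕ} {u : Fin d → ℝ} (hu : u ≠ 0) : 0 < dotProd u u := by
  have h : ∃ i, u i ≠ 0 := by
    by_contra h; push_neg at h; exact hu (funext h)
  obtain ⟨i, hi⟩ := h
  have : (0:ℝ) < u i * u i := mul_self_pos.mpr hi
  calc (0:ℝ) < u i * u i := this
    _ ≤ ∑ j, u j * u j := Finset.single_le_sum (f := fun j => u j * u j)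
        (fun j _ => mul_self_nonneg _) (Finset.mem_univ i)

lemma eq_zero_of_dot_self {d : ℕ} {u : Fin d → ℝ} (h : dotProd u u = 0) : u = 0 := by
  by_contra hu; exact absurd h (ne_of_gt (dot_self_pos hu))

lemma lattice_sub {d : ℕ} {x y : Fin d → ℝ} (hx : IsLatticePoint x) (hy : IsLatticePoint y) :
    IsLatticePoint (x - y) := by
  intro i; obtain ⟨n, hn⟩ := hx i; obtain ⟨m, hm⟩ := hy i
  exact ⟨n - m, by simp [hn, hm]⟩

lemma lattice_add {d : ℕ} {x y : Fin d → ℝ} (hx : IsLatticePoint x) (hy : IsLatticePoint y) :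
    IsLatticePoint (x + y) := by
  intro i; obtain ⟨n, hn⟩ := hx i; obtain ⟨m, hm⟩ := hy i
  exact ⟨n + m, by simp [hn, hm]⟩

lemma lattice_zsmul {d : ℕ} (n : ℤ) {x : Fin d → ℝ} (hx : IsLatticePoint x) :
    IsLatticePoint ((n : ℝ) • x) := by
  intro i; obtain ⟨m, hm⟩ := hx i
  exact ⟨n * m, by simp [hm]⟩

lemma dot_int {d : ℕ} {x y : Fin d → ℝ} (hx : IsLatticePoint x) (hy : IsLatticePoint y) :
    ∃ n : ℤ, dotProd x y = (n : ℝ) := by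
  classical
  choose f hf using hx
  choose g hg using hy
  refine ⟨∑ i, f i * g i, ?_⟩
  simp only [dotProd]
  push_cast
  exact Finset.sum_congr rfl fun i _ => by rw [hf i, hg i]

/-- The explicit combination set for a triple. -/
def comboSet {d : ℕ} (x y z : Fin d → ℝ) : Set (Fin d → ℝ) :=
  {w | ∃ a b c : ℝ, 0 ≤ a ∧ 0 ≤ b ∧ 0 ≤ c ∧ a + b + c = 1 ∧ w = a • x + b • y + c • z}

lemma combo_mem_convexHull {d : ℕ} {x y z : Fin d → ℝ} {a b c : ℝ}
    (ha : 0 ≤ a) (hb : 0 ≤ b) (hc : 0 ≤ c) (habc : a + b + c = 1) :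
    a • x + b • y + c • z ∈ convexHull ℝ ({x, y, z} : Set (Fin d → ℝ)) := by
  have h := Convex.sum_mem (s := convexHull ℝ ({x, y, z} : Set (Fin d → ℝ)))
    (t := (Finset.univ : Finset (Fin 3))) (w := ![a,b,c]) (z := ![x,y,z])
    (convex_convexHull ℝ _) ?_ ?_ ?_
  · simpa [Fin.sum_univ_three] using h
  · intro i _; fin_cases i <;> simpa
  · simp [Fin.sum_univ_three, habc]
  · intro i _; fin_cases i <;>
      · apply subset_convexHull; simp
  
lemma convexHull_triple_subset {d : ℕ} (x y z : Fin d → ℝ) :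
    convexHull ℝ ({x, y, z} : Set (Fin d → ℝ)) ⊆ comboSet x y z := by
  apply convexHull_min
  · intro w hw
    rcases hw with h | h | h
    · exact ⟨1, 0, 0, by norm_num, by norm_num, by norm_num, by norm_num, by simp [h]⟩
    · exact ⟨0, 1, 0, by norm_num, by norm_num, by norm_num, by norm_num, by simp [h]⟩
    · exact ⟨0, 0, 1, by norm_num, by norm_num, by norm_num, by norm_num,
        by simp [Set.mem_singleton_iff.mp h]⟩
  · rintro w₁ hw₁ w₂ hw₂ s t hs ht hst
    obtain ⟨a₁, b₁, c₁, ha₁, hb₁, hc₁, h₁, e₁⟩ := hw₁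
    obtain ⟨a₂, b₂, c₂, ha₂, hb₂, hc₂, h₂, e₂⟩ := hw₂
    refine ⟨s*a₁+t*a₂, s*b₁+t*b₂, s*c₁+t*c₂, by positivity, by positivity, by positivity, ?_, ?_⟩
    · nlinarith
    · rw [e₁, e₂]; simp only [add_smul, mul_smul, smul_add]; module

lemma mem_convexHull_triple_iff {d : ℕ} (x y z w : Fin d → ℝ) :
    w ∈ convexHull ℝ ({x, y, z} : Set (Fin d → ℝ)) ↔ w ∈ comboSet x y z := by
  constructor
  · exact fun h => convexHull_triple_subset x y z h
  · rintro ⟨a, b, c, ha, hb, hc, habc, rfl⟩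
    exact combo_mem_convexHull ha hb hc habc

/-- linear independence of a triple from the combination criterion -/
lemma li_triple {d : ℕ} {x y z : Fin d → ℝ}
    (h : ∀ a b c : ℝ, a • x + b • y + c • z = 0 → a = 0 ∧ b = 0 ∧ c = 0) :
    LinearIndependent ℝ ![x, y, z] := by
  rw [Fintype.linearIndependent_iff]
  intro g hg i
  have hg' : g 0 • x + g 1 • y + g 2 • z = 0 := by
    simpa [Fin.sum_univ_three] using hg
  obtain ⟨h0, h1, h2⟩ := h _ _ _ hg'
  fin_cases i <;> assumption

/-- extraction of coefficients for a linearly independent triple -/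
lemma coeff_eq {d : ℕ} {x y z : Fin d → ℝ} (hli : LinearIndependent ℝ ![x, y, z])
    {a₁ b₁ c₁ a₂ b₂ c₂ : ℝ} (h : a₁ • x + b₁ • y + c₁ • z = a₂ • x + b₂ • y + c₂ • z) :
    a₁ = a₂ ∧ b₁ = b₂ ∧ c₁ = c₂ := by
  rw [Fintype.linearIndependent_iff] at hli
  have h' : ∑ i, (![a₁-a₂, b₁-b₂, c₁-c₂]) i • ![x,y,z] i = 0 := by
    simp only [Fin.sum_univ_three]
    simp only [Matrix.cons_val_zero, Matrix.cons_val_one, Matrix.head_cons,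
      Matrix.cons_val_two, Matrix.tail_cons]
    rw [sub_smul, sub_smul, sub_smul]
    rw [show (a₁ • x - a₂ • x) + (b₁ • y - b₂ • y) + (c₁ • z - c₂ • z)
        = (a₁ • x + b₁ • y + c₁ • z) - (a₂ • x + b₂ • y + c₂ • z) by abel, h, sub_self]
  have := hli _ h'
  refine ⟨?_, ?_, ?_⟩
  · have := this 0; simpa [sub_eq_zero] using this
  · have := this 1; simpa [sub_eq_zero] using this
  · have := this 2; simpa [sub_eq_zero] using this

end Aux

namespace Aux

lemma vectorSpan_triple {d : ℕ} (x y z : Fin d → ℝ) :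
    vectorSpan ℝ ({x, y, z} : Set (Fin d → ℝ))
      = Submodule.span ℝ (Set.range ![y - x, z - x]) := by
  have hr : Set.range ![y - x, z - x] = ({y - x, z - x} : Set (Fin d → ℝ)) := by
    simp [Matrix.range_cons, Matrix.range_empty, Set.pair_comm]
  rw [hr]
  apply le_antisymm
  · rw [vectorSpan, Submodule.span_le]
    rintro v hv
    rw [Set.mem_vsub] at hv
    obtain ⟨p, hp, q, hq, rfl⟩ := hv
    have hyx : y - x ∈ Submodule.span ℝ ({y - x, z - x} : Set (Fin d → ℝ)) :=
      Submodule.subset_span (by simp)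
    have hzx : z - x ∈ Submodule.span ℝ ({y - x, z - x} : Set (Fin d → ℝ)) :=
      Submodule.subset_span (by simp)
    have key : ∀ p ∈ ({x, y, z} : Set (Fin d → ℝ)),
        p - x ∈ Submodule.span ℝ ({y - x, z - x} : Set (Fin d → ℝ)) := by
      rintro p (rfl | rfl | rfl)
      · simpa using Submodule.zero_mem _
      · exact hyx
      · exact hzx
    have : p -ᵥ q = (p - x) - (q - x) := by simp [vsub_eq_sub]
    rw [this]
    exact Submodule.sub_mem _ (key p hp) (key q hq)
  · rw [Submodule.span_le]
    rintro v (rfl | rfl)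
    · exact vsub_mem_vectorSpan ℝ (by simp : y ∈ _) (by simp : x ∈ _)
    · exact vsub_mem_vectorSpan ℝ (by simp : z ∈ _) (by simp : x ∈ _)

lemma vectorSpan_convexHull {d : ℕ} (s : Set (Fin d → ℝ)) :
    vectorSpan ℝ (convexHull ℝ s) = vectorSpan ℝ s := by
  rw [← direction_affineSpan, affineSpan_convexHull, direction_affineSpan]

lemma rank2_iff {d : ℕ} (x y z : Fin d → ℝ) :
    Module.finrank ℝ (vectorSpan ℝ (convexHull ℝ ({x, y, z} : Set (Fin d → ℝ)))) = 2 ↔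
      LinearIndependent ℝ ![y - x, z - x] := by
  rw [vectorSpan_convexHull, vectorSpan_triple,
    linearIndependent_iff_card_eq_finrank_span]
  simp [Set.finrank, eq_comm]

lemma li_triple_of_pair {d : ℕ} {x y z u : Fin d → ℝ} {c : ℝ} (hc : c ≠ 0)
    (hx : dotProd u x = c) (hy : dotProd u y = c) (hz : dotProd u z = c)
    (hli : LinearIndependent ℝ ![y - x, z - x]) :
    LinearIndependent ℝ ![x, y, z] := by
  apply li_triple
  intro a b e h
  have hsum : a + b + e = 0 := by
    have h5 := congrArg (fun w => dotProd u w) h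
    rw [dot_add, dot_add, dot_smul, dot_smul, dot_smul, hx, hy, hz, dot_zero] at h5
    have h6 : (a + b + e) * c = 0 := by linarith
    exact (mul_eq_zero.mp h6).resolve_right hc
  have he : e = -a - b := by linarith
  have h2 : b • (y - x) + e • (z - x) = 0 := by
    rw [smul_sub, smul_sub]
    have : b • y - b • x + (e • z - e • x) = a • x + b • y + e • z - (a + b + e) • x := by
      rw [add_smul, add_smul]; abel
    rw [this, h, hsum]; simp
  rw [Fintype.linearIndependent_iff] at hli
  have := hli ![b, e] (by simpa [Fin.sum_univ_two] using h2)
  have hb : b = 0 := by simpa using this 0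
  have hee : e = 0 := by simpa using this 1
  refine ⟨by linarith, hb, hee⟩

lemma fullspan {d : ℕ} {P : Set (Fin d → ℝ)} (h0 : (0 : Fin d → ℝ) ∈ interior P) :
    vectorSpan ℝ P = ⊤ := by
  rw [mem_interior_iff_mem_nhds, Metric.mem_nhds_iff] at h0
  obtain ⟨ε, hε, hball⟩ := h0
  rw [Submodule.eq_top_iff']
  intro v
  have hmem : ∀ w : Fin d → ℝ, ‖w‖ < ε → w ∈ vectorSpan ℝ P := by
    intro w hw
    have hwP : w ∈ P := hball (by simpa [Metric.mem_ball] using hw)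
    have h0P : (0 : Fin d → ℝ) ∈ P := hball (by simpa [Metric.mem_ball] using hε)
    simpa [vsub_eq_sub] using vsub_mem_vectorSpan ℝ hwP h0P
  by_cases hv : v = 0
  · simp [hv]
  · have hnorm : (0:ℝ) < ‖v‖ := norm_pos_iff.mpr hv
    have key : (ε / (2 * ‖v‖)) • v ∈ vectorSpan ℝ P := by
      apply hmem
      rw [norm_smul]
      rw [Real.norm_eq_abs, abs_of_pos (by positivity)]
      rw [div_mul_eq_mul_div, mul_comm]
      rw [div_lt_iff₀ (by positivity)]
      nlinarith
    have : v = (2 * ‖v‖ / ε) • ((ε / (2 * ‖v‖)) • v) := by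
      rw [smul_smul, show 2 * ‖v‖ / ε * (ε / (2 * ‖v‖)) = 1 by field_simp]
      simp
    rw [this]
    exact Submodule.smul_mem _ _ key

end Aux

namespace Aux

/-- Facet functional facts: u ≠ 0 and c > 0, normalized dual element. -/
lemma facet_dual {d : ℕ} {P F : Set (Fin d → ℝ)} (h0 : (0 : Fin d → ℝ) ∈ interior P)
    (hd : 1 ≤ d) (hF : IsFacet P F) :
    ∃ u' : Fin d → ℝ, u' ∈ dualPolytope P ∧ ∀ w ∈ F, dotProd u' w = -1 := by
  obtain ⟨⟨u, c, hsupp, hFeq⟩, hne, hrank⟩ := hF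
  have hu : u ≠ 0 := by
    rintro rfl
    by_cases hc : c = 0
    · subst hc
      have hFP : F = P := by
        rw [hFeq]; ext w; simp only [Set.mem_setOf_eq, dot_zero_left, and_iff_left_iff_imp]
        intro _; trivial
      rw [hFP] at hrank
      rw [fullspan h0, finrank_top] at hrank
      simp [Module.finrank_pi] at hrank
      omega
    · have : F = ∅ := by
        rw [hFeq]; ext w
        simp only [Set.mem_setOf_eq, dot_zero_left, Set.mem_empty_iff_false, iff_false, not_and]
        exact fun _ h => hc h.symm
      rw [this] at hne
      exact absurd hne (by simp)
  -- c > 0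
  rw [mem_interior_iff_mem_nhds, Metric.mem_nhds_iff] at h0
  obtain ⟨ε, hε, hball⟩ := h0
  have hnu : (0:ℝ) < ‖u‖ := norm_pos_iff.mpr hu
  have hp : (ε / (2 * ‖u‖)) • u ∈ P := by
    apply hball
    rw [Metric.mem_ball, dist_zero_right, norm_smul, Real.norm_eq_abs,
      abs_of_pos (by positivity), div_mul_eq_mul_div, mul_comm, div_lt_iff₀ (by positivity)]
    nlinarith
  have hcpos : 0 < c := by
    have h1 := hsupp _ hp
    rw [dot_smul] at h1
    have h2 : 0 < dotProd u u := dot_self_pos hu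
    have : 0 < ε / (2 * ‖u‖) * dotProd u u := by positivity
    linarith
  refine ⟨(-(1/c)) • u, ?_, ?_⟩
  · intro p hp'
    have h1 := hsupp _ hp'
    rw [dot_comm, dot_smul_left]
    have : -(1/c) * dotProd u p ≥ -(1/c) * c := by
      apply mul_le_mul_of_nonpos_left h1
      simp only [neg_nonpos]
      positivity
    calc (-1 : ℝ) = -(1/c) * c := by field_simp
      _ ≤ -(1/c) * dotProd u p := this
  · intro w hw
    rw [hFeq] at hw
    rw [dot_smul_left, hw.2]
    field_simp

/-- The key duality lemma: lattice points x,y,z in a facet with x,y,z a linearly independent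
triple admit a common lattice functional with value -1. -/
lemma dual_lattice_functional {d : ℕ} {P : Set (Fin d → ℝ)} (hP : IsReflexive P)
    (hd : 1 ≤ d) {F : Set (Fin d → ℝ)} (hF : IsFacet P F) {x y z : Fin d → ℝ}
    (hxF : x ∈ F) (hyF : y ∈ F) (hzF : z ∈ F)
    (hli : LinearIndependent ℝ ![x, y, z]) (hdim : d = 3) :
    ∃ u : Fin d → ℝ, IsLatticePoint u ∧
      dotProd x u = -1 ∧ dotProd y u = -1 ∧ dotProd z u = -1 := by
  obtain ⟨hPl, h0, hdual⟩ := hP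
  obtain ⟨u', hu'dual, hu'val⟩ := facet_dual h0 hd hF
  obtain ⟨V', hV'lat, hV'eq⟩ := hdual
  have hbasis : ∀ v : Fin d → ℝ, dotProd x v = 0 → dotProd y v = 0 → dotProd z v = 0 →
      v = 0 := by
    subst hdim
    intro v hvx hvy hvz
    have B := basisOfLinearIndependentOfCardEqFinrank hli (by simp [Module.finrank_pi])
    have hB : ∀ i, basisOfLinearIndependentOfCardEqFinrank hli
        (by simp [Module.finrank_pi] : Fintype.card (Fin 3) = Module.finrank ℝ (Fin 3 → ℝ))
        i = ![x, y, z] i := fun i =>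
      congrFun (coe_basisOfLinearIndependentOfCardEqFinrank hli _) i
    set B := basisOfLinearIndependentOfCardEqFinrank hli
      (by simp [Module.finrank_pi] : Fintype.card (Fin 3) = Module.finrank ℝ (Fin 3 → ℝ))
    apply eq_zero_of_dot_self
    have hrepr := B.sum_repr v
    calc dotProd v v = dotProd v (∑ i, B.repr v i • B i) := by rw [hrepr]
      _ = ∑ i, dotProd v (B.repr v i • B i) := dot_sum v _ _
      _ = ∑ i, B.repr v i * dotProd (B i) v := by
          refine Finset.sum_congr rfl fun i _ => ?_
          rw [dot_smul, dot_comm v (B i)]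
      _ = B.repr v 0 * dotProd (B 0) v + B.repr v 1 * dotProd (B 1) v
            + B.repr v 2 * dotProd (B 2) v := by
          exact Fin.sum_univ_three _
      _ = 0 := by
          rw [hB 0, hB 1, hB 2]
          simp only [Matrix.cons_val_zero, Matrix.cons_val_one, Matrix.head_cons,
            Matrix.cons_val_two, Matrix.tail_cons]
          rw [hvx, hvy, hvz]; ring
  obtain ⟨⟨u₀, c₀, hsupp₀, hFeq₀⟩, hne₀, hrank₀⟩ := hF
  have hFsubP : F ⊆ P := by rw [hFeq₀]; exact fun w hw => hw.1
  have hval : ∀ p ∈ ({x, y, z} : Set (Fin d → ℝ)), dotProd p u' = -1 := by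
    rintro p (rfl | rfl | rfl)
    · rw [dot_comm]; exact hu'val _ hxF
    · rw [dot_comm]; exact hu'val _ hyF
    · rw [dot_comm]; exact hu'val _ hzF
  have hPmem : ∀ p ∈ ({x, y, z} : Set (Fin d → ℝ)), p ∈ P := by
    rintro p (rfl | rfl | rfl)
    exacts [hFsubP hxF, hFsubP hyF, hFsubP hzF]
  have hext : u' ∈ Set.extremePoints ℝ (dualPolytope P) := by
    rw [mem_extremePoints]
    refine ⟨hu'dual, ?_⟩
    intro a ha b hb hseg
    obtain ⟨ta, tb, hta, htb, htab, heq⟩ := hseg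
    have key : ∀ p ∈ ({x, y, z} : Set (Fin d → ℝ)),
        dotProd p a = -1 ∧ dotProd p b = -1 := by
      intro p hp
      have hA : -1 ≤ dotProd p a := ha p (hPmem p hp)
      have hB : -1 ≤ dotProd p b := hb p (hPmem p hp)
      have hcomb : ta * dotProd p a + tb * dotProd p b = -1 := by
        have := congrArg (fun w => dotProd p w) heq
        rw [dot_add, dot_smul, dot_smul] at this
        rw [this]
        exact hval p hp
      constructor <;> nlinarith
    have hxa := (key x (by simp)).1
    have hya := (key y (by simp)).1
    have hza := (key z (by simp)).1
    have hxb := (key x (by simp)).2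
    have hyb := (key y (by simp)).2
    have hzb := (key z (by simp)).2
    have hvalx := hval x (by simp)
    have hvaly := hval y (by simp)
    have hvalz := hval z (by simp)
    constructor
    · have : a - u' = 0 := by
        apply hbasis
        · rw [dot_sub, hxa, hvalx]; ring
        · rw [dot_sub, hya, hvaly]; ring
        · rw [dot_sub, hza, hvalz]; ring
      have := sub_eq_zero.mp this; exact this
    · have : b - u' = 0 := by
        apply hbasis
        · rw [dot_sub, hxb, hvalx]; ring
        · rw [dot_sub, hyb, hvaly]; ring
        · rw [dot_sub, hzb, hvalz]; ring
      have := sub_eq_zero.mp this; exact this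
  rw [hV'eq] at hext
  have hu'V : u' ∈ (V' : Set (Fin d → ℝ)) := extremePoints_convexHull_subset hext
  exact ⟨u', hV'lat u' hu'V, hval x (by simp), hval y (by simp), hval z (by simp)⟩


end Aux

namespace Aux

lemma li_pair_of_triple {d : ℕ} {x y z : Fin d → ℝ} (hli : LinearIndependent ℝ ![x, y, z]) :
    LinearIndependent ℝ ![y - x, z - x] := by
  rw [Fintype.linearIndependent_iff] at hli ⊢
  intro g hg
  have h2 : g 0 • (y - x) + g 1 • (z - x) = 0 := by
    simpa [Fin.sum_univ_two] using hg
  have h3 : (-(g 0) - g 1) • x + g 0 • y + g 1 • z = 0 := by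
    rw [smul_sub, smul_sub] at h2
    rw [sub_smul, neg_smul]
    have : -(g 0 • x) - g 1 • x + g 0 • y + g 1 • z
        = g 0 • y - g 0 • x + (g 1 • z - g 1 • x) := by abel
    rw [this, h2]
  have := hli ![-(g 0) - g 1, g 0, g 1] (by simpa [Fin.sum_univ_three] using h3)
  intro i
  fin_cases i
  · simpa using this 1
  · simpa using this 2

/-- decomposition of a vector along a linearly independent triple in dimension 3 -/
lemma decomp {x y z : Fin 3 → ℝ} (hli : LinearIndependent ℝ ![x, y, z]) (w : Fin 3 → ℝ) :
    ∃ a b c : ℝ, w = a • x + b • y + c • z := by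
  have hcard : Fintype.card (Fin 3) = Module.finrank ℝ (Fin 3 → ℝ) := by
    simp [Module.finrank_pi]
  set B := basisOfLinearIndependentOfCardEqFinrank hli hcard with hBdef
  have hB : ∀ i, B i = ![x, y, z] i := fun i =>
    congrFun (coe_basisOfLinearIndependentOfCardEqFinrank hli hcard) i
  refine ⟨B.repr w 0, B.repr w 1, B.repr w 2, ?_⟩
  have := (B.sum_repr w).symm
  rw [Fin.sum_univ_three] at this
  conv_lhs => rw [this]
  rw [hB 0, hB 1, hB 2]
  simp only [Matrix.cons_val_zero, Matrix.cons_val_one, Matrix.head_cons,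
    Matrix.cons_val_two, Matrix.tail_cons]

/-- Part 1, forward direction. -/
lemma forward_dir {x y z : Fin 3 → ℝ}
    (hZ : IsZBasisFamily ![x, y, z]) :
    Module.finrank ℝ (vectorSpan ℝ (convexHull ℝ ({x, y, z} : Set (Fin 3 → ℝ)))) = 2 ∧
      {w ∈ convexHull ℝ ({x, y, z} : Set (Fin 3 → ℝ)) | IsLatticePoint w} = {x, y, z} := by
  obtain ⟨hli, hlat, hspan⟩ := hZ
  have hlx : IsLatticePoint x := by simpa using hlat 0
  have hly : IsLatticePoint y := by simpa using hlat 1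
  have hlz : IsLatticePoint z := by simpa using hlat 2
  constructor
  · exact (rank2_iff x y z).mpr (li_pair_of_triple hli)
  · ext w
    simp only [Set.mem_setOf_eq, Set.mem_insert_iff, Set.mem_singleton_iff]
    constructor
    · rintro ⟨hwc, hwl⟩
      obtain ⟨a, b, c, ha, hb, hc, habc, hweq⟩ := convexHull_triple_subset x y z hwc
      obtain ⟨co, hco⟩ := hspan w hwl
      have hco' : w = (co 0 : ℝ) • x + (co 1 : ℝ) • y + (co 2 : ℝ) • z := by
        rw [hco, Fin.sum_univ_three]; simp
      have heq : a • x + b • y + c • z = (co 0 : ℝ) • x + (co 1 : ℝ) • y + (co 2 : ℝ) • z := by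
        rw [← hweq, ← hco']
      obtain ⟨h0, h1, h2⟩ := coeff_eq hli heq
      have hsint : co 0 + co 1 + co 2 = 1 := by
        have : ((co 0 : ℝ) + co 1 + co 2) = 1 := by rw [← h0, ← h1, ← h2]; exact habc
        exact_mod_cast this
      have hn0 : 0 ≤ co 0 := by exact_mod_cast h0 ▸ ha
      have hn1 : 0 ≤ co 1 := by exact_mod_cast h1 ▸ hb
      have hn2 : 0 ≤ co 2 := by exact_mod_cast h2 ▸ hc
      have hcases : (co 0 = 1 ∧ co 1 = 0 ∧ co 2 = 0) ∨ (co 0 = 0 ∧ co 1 = 1 ∧ co 2 = 0)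
          ∨ (co 0 = 0 ∧ co 1 = 0 ∧ co 2 = 1) := by omega
      rcases hcases with ⟨e0, e1, e2⟩ | ⟨e0, e1, e2⟩ | ⟨e0, e1, e2⟩ <;>
        · rw [e0, e1, e2] at hco'
          simp at hco'
          tauto
    · rintro (rfl | rfl | rfl)
      · exact ⟨subset_convexHull ℝ _ (by simp), hlx⟩
      · exact ⟨subset_convexHull ℝ _ (by simp), hly⟩
      · exact ⟨subset_convexHull ℝ _ (by simp), hlz⟩

end Aux

namespace Aux

lemma reverse_dir {P : Set (Fin 3 → ℝ)} (hP : IsReflexive P) {F : Set (Fin 3 → ℝ)}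
    (hF : IsFacet P F) {x y z : Fin 3 → ℝ}
    (hx : IsLatticePoint x) (hy : IsLatticePoint y) (hz : IsLatticePoint z)
    (hxF : x ∈ F) (hyF : y ∈ F) (hzF : z ∈ F)
    (hrank : Module.finrank ℝ (vectorSpan ℝ (convexHull ℝ ({x, y, z} : Set (Fin 3 → ℝ)))) = 2)
    (hempty : {w ∈ convexHull ℝ ({x, y, z} : Set (Fin 3 → ℝ)) | IsLatticePoint w} = {x, y, z}) :
    IsZBasisFamily ![x, y, z] := by
  have hli2 : LinearIndependent ℝ ![y - x, z - x] := (rank2_iff x y z).mp hrank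
  obtain ⟨u', hu'dual, hu'val⟩ := facet_dual hP.2.1 (by norm_num) hF
  have hli : LinearIndependent ℝ ![x, y, z] :=
    li_triple_of_pair (c := -1) (by norm_num)
      (hu'val x hxF) (hu'val y hyF) (hu'val z hzF) hli2
  obtain ⟨u, hulat, hux, huy, huz⟩ :=
    dual_lattice_functional hP (by norm_num) hF hxF hyF hzF hli rfl
  refine ⟨hli, ?_, ?_⟩
  · intro i; fin_cases i <;> assumption
  · intro w hw
    obtain ⟨a, b, c, hweq⟩ := decomp hli w
    set fa := Int.fract a with hfa
    set fb := Int.fract b with hfb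
    set fc := Int.fract c with hfc
    have hfa0 : 0 ≤ fa := Int.fract_nonneg a
    have hfb0 : 0 ≤ fb := Int.fract_nonneg b
    have hfc0 : 0 ≤ fc := Int.fract_nonneg c
    have hfa1 : fa < 1 := Int.fract_lt_one a
    have hfb1 : fb < 1 := Int.fract_lt_one b
    have hfc1 : fc < 1 := Int.fract_lt_one c
    set w₀ : Fin 3 → ℝ := fa • x + fb • y + fc • z with hw₀
    have hw₀eq : w₀ = w - ((⌊a⌋ : ℝ) • x + (⌊b⌋ : ℝ) • y + (⌊c⌋ : ℝ) • z) := by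
      rw [hw₀, hweq, hfa, hfb, hfc, Int.fract, Int.fract, Int.fract]
      simp only [sub_smul]
      abel
    have hw₀lat : IsLatticePoint w₀ := by
      rw [hw₀eq]
      exact lattice_sub hw (lattice_add (lattice_add (lattice_zsmul _ hx) (lattice_zsmul _ hy))
        (lattice_zsmul _ hz))
    have hdotw₀ : dotProd u w₀ = -(fa + fb + fc) := by
      rw [hw₀, dot_add, dot_add, dot_smul, dot_smul, dot_smul,
        dot_comm u x, dot_comm u y, dot_comm u z, hux, huy, huz]
      ring
    obtain ⟨n, hn⟩ := dot_int hulat hw₀lat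
    have hns : (n : ℝ) = -(fa + fb + fc) := by rw [← hn, hdotw₀]
    have hnrange : n = 0 ∨ n = -1 ∨ n = -2 := by
      have h1 : (-3 : ℝ) < (n : ℝ) := by rw [hns]; linarith
      have h2 : (n : ℝ) ≤ 0 := by rw [hns]; linarith
      have h1' : (-3 : ℤ) < n := by exact_mod_cast h1
      have h2' : n ≤ 0 := by exact_mod_cast h2
      omega
    have hsum0 : fa + fb + fc = 0 := by
      rcases hnrange with h | h | h
      · rw [h] at hns; push_cast at hns; linarith
      · -- sum = 1 : w₀ is a lattice point in the triangle, contradiction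
        exfalso
        have hs1 : fa + fb + fc = 1 := by rw [h] at hns; push_cast at hns; linarith
        have hmem : w₀ ∈ convexHull ℝ ({x, y, z} : Set (Fin 3 → ℝ)) :=
          combo_mem_convexHull hfa0 hfb0 hfc0 hs1
        have : w₀ ∈ ({x, y, z} : Set (Fin 3 → ℝ)) := by
          rw [← hempty]; exact ⟨hmem, hw₀lat⟩
        rcases this with h' | h' | h'
        · have : fa • x + fb • y + fc • z = (1:ℝ) • x + (0:ℝ) • y + (0:ℝ) • z := by
            rw [← hw₀, h']; simp
          exact absurd (coeff_eq hli this).1 (by linarith)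
        · have : fa • x + fb • y + fc • z = (0:ℝ) • x + (1:ℝ) • y + (0:ℝ) • z := by
            rw [← hw₀, h']; simp
          exact absurd (coeff_eq hli this).2.1 (by linarith)
        · rw [Set.mem_singleton_iff] at h'
          have : fa • x + fb • y + fc • z = (0:ℝ) • x + (0:ℝ) • y + (1:ℝ) • z := by
            rw [← hw₀, h']; simp
          exact absurd (coeff_eq hli this).2.2 (by linarith)
      · -- sum = 2 : x+y+z-w₀ is a lattice point in the triangle, contradiction
        exfalso
        have hs2 : fa + fb + fc = 2 := by rw [h] at hns; push_cast at hns; linarith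
        set w₁ : Fin 3 → ℝ := (1 - fa) • x + (1 - fb) • y + (1 - fc) • z with hw₁
        have hw₁eq : w₁ = (x + y + z) - w₀ := by
          rw [hw₁, hw₀]
          simp only [sub_smul, one_smul]
          abel
        have hw₁lat : IsLatticePoint w₁ := by
          rw [hw₁eq]
          exact lattice_sub (lattice_add (lattice_add hx hy) hz) hw₀lat
        have hmem : w₁ ∈ convexHull ℝ ({x, y, z} : Set (Fin 3 → ℝ)) :=
          combo_mem_convexHull (by linarith) (by linarith) (by linarith) (by linarith)
        have : w₁ ∈ ({x, y, z} : Set (Fin 3 → ℝ)) := by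
          rw [← hempty]; exact ⟨hmem, hw₁lat⟩
        rcases this with h' | h' | h'
        · have : (1-fa) • x + (1-fb) • y + (1-fc) • z = (1:ℝ) • x + (0:ℝ) • y + (0:ℝ) • z := by
            rw [← hw₁, h']; simp
          exact absurd (coeff_eq hli this).2.1 (by linarith)
        · have : (1-fa) • x + (1-fb) • y + (1-fc) • z = (0:ℝ) • x + (1:ℝ) • y + (0:ℝ) • z := by
            rw [← hw₁, h']; simp
          exact absurd (coeff_eq hli this).1 (by linarith)
        · rw [Set.mem_singleton_iff] at h'
          have : (1-fa) • x + (1-fb) • y + (1-fc) • z = (0:ℝ) • x + (0:ℝ) • y + (1:ℝ) • z := by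
            rw [← hw₁, h']; simp
          exact absurd (coeff_eq hli this).1 (by linarith)
    have hfa' : fa = 0 := by linarith
    have hfb' : fb = 0 := by linarith
    have hfc' : fc = 0 := by linarith
    have ha' : a = (⌊a⌋ : ℝ) := by
      have := Int.fract_add_floor a
      rw [← hfa] at this; linarith
    have hb' : b = (⌊b⌋ : ℝ) := by
      have := Int.fract_add_floor b
      rw [← hfb] at this; linarith
    have hc' : c = (⌊c⌋ : ℝ) := by
      have := Int.fract_add_floor c
      rw [← hfc] at this; linarith
    refine ⟨![⌊a⌋, ⌊b⌋, ⌊c⌋], ?_⟩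
    rw [Fin.sum_univ_three]
    simp only [Matrix.cons_val_zero, Matrix.cons_val_one, Matrix.head_cons,
      Matrix.cons_val_two, Matrix.tail_cons]
    rw [hweq]
    nth_rewrite 1 [ha']
    nth_rewrite 1 [hb']
    nth_rewrite 1 [hc']
    rfl

end Aux

namespace Aux

lemma convex_of_latticePolytope {d : ℕ} {P : Set (Fin d → ℝ)} (hP : IsLatticePolytope P) :
    Convex ℝ P := by
  obtain ⟨V, _, rfl⟩ := hP
  exact convex_convexHull ℝ _

lemma extremePoints_face_subset {d : ℕ} {P F : Set (Fin d → ℝ)} {u : Fin d → ℝ} {c : ℝ}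
    (hsupp : ∀ x ∈ P, dotProd u x ≤ c) (hFeq : F = {x ∈ P | dotProd u x = c}) :
    Set.extremePoints ℝ F ⊆ Set.extremePoints ℝ P := by
  intro v hv
  rw [mem_extremePoints] at hv ⊢
  obtain ⟨hvF, hvext⟩ := hv
  have hvP : v ∈ P := by rw [hFeq] at hvF; exact hvF.1
  refine ⟨hvP, ?_⟩
  intro a ha b hb hseg
  obtain ⟨ta, tb, hta, htb, htab, heq⟩ := hseg
  have hvc : dotProd u v = c := by rw [hFeq] at hvF; exact hvF.2
  have hcomb : ta * dotProd u a + tb * dotProd u b = c := by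
    have := congrArg (fun w => dotProd u w) heq
    rw [dot_add, dot_smul, dot_smul] at this
    rw [this, hvc]
  have haA : dotProd u a ≤ c := hsupp a ha
  have hbB : dotProd u b ≤ c := hsupp b hb
  have hc' : ta * c + tb * c = c := by rw [← add_mul, htab, one_mul]
  have hac : dotProd u a = c := by
    by_contra hne'
    have h1 : dotProd u a < c := lt_of_le_of_ne haA hne'
    have h2 := mul_lt_mul_of_pos_left h1 hta
    have h3 := mul_le_mul_of_nonneg_left hbB (le_of_lt htb)
    linarith
  have hbc : dotProd u b = c := by
    by_contra hne'
    have h1 : dotProd u b < c := lt_of_le_of_ne hbB hne'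
    have h2 := mul_lt_mul_of_pos_left h1 htb
    have h3 := mul_le_mul_of_nonneg_left haA (le_of_lt hta)
    linarith
  have haF : a ∈ F := by rw [hFeq]; exact ⟨ha, hac⟩
  have hbF : b ∈ F := by rw [hFeq]; exact ⟨hb, hbc⟩
  exact hvext a haF b hbF ⟨ta, tb, hta, htb, htab, heq⟩

lemma extremePoint_of_subset {d : ℕ} {P F : Set (Fin d → ℝ)} (hFP : F ⊆ P)
    {v : Fin d → ℝ} (hv : v ∈ Set.extremePoints ℝ P) (hvF : v ∈ F) :
    v ∈ Set.extremePoints ℝ F := by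
  rw [mem_extremePoints] at hv ⊢
  exact ⟨hvF, fun a ha b hb hseg => hv.2 a (hFP ha) b (hFP hb) hseg⟩

lemma dot_continuous {d : ℕ} (u : Fin d → ℝ) : Continuous (fun x : Fin d → ℝ => dotProd u x) := by
  unfold dotProd
  exact continuous_finset_sum _ fun i _ => (continuous_const.mul (continuous_apply i))

/-- Part 2: simplicial + terminal + reflexive implies smooth, in dimension 3. -/
lemma part_two {Q : Set (Fin 3 → ℝ)} (hQ : IsReflexive Q) (hsimp : IsSimplicial Q)
    (hterm : IsTerminalPolytope Q) : IsSmoothPolytope Q := by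
  intro F hF
  have h3 : (Set.extremePoints ℝ F).ncard = 3 := hsimp F hF
  obtain ⟨x, y, z, hxy, hxz, hyz, hEP⟩ := Set.ncard_eq_three.mp h3
  obtain ⟨⟨u, c, hsupp, hFeq⟩, hne, hrankF⟩ := hF
  have hFsubQ : F ⊆ Q := by rw [hFeq]; exact fun w hw => hw.1
  obtain ⟨VQ, hVQlat, hQeq⟩ := hQ.1
  have hQconv : Convex ℝ Q := by rw [hQeq]; exact convex_convexHull ℝ _
  have hQcomp : IsCompact Q := by
    rw [hQeq]; exact Set.Finite.isCompact_convexHull ℝ (VQ.finite_toSet)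
  have hFconv : Convex ℝ F := by
    have : F = Q ∩ {w | dotProd u w = c} := by
      rw [hFeq]; rfl
    rw [this]
    exact hQconv.inter (convex_hyperplane (dot_linear u) c)
  have hFclosed : IsClosed F := by
    have : F = Q ∩ (fun w => dotProd u w) ⁻¹' {c} := by
      rw [hFeq]; ext w; simp [Set.mem_setOf_eq]
    rw [this]
    exact hQcomp.isClosed.inter (IsClosed.preimage (dot_continuous u) isClosed_singleton)
  have hFcomp : IsCompact F := hQcomp.of_isClosed_subset hFclosed hFsubQ
  have hKM : F = convexHull ℝ ({x, y, z} : Set (Fin 3 → ℝ)) := by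
    have h1 := closure_convexHull_extremePoints hFcomp hFconv
    rw [hEP] at h1
    have h2 : IsClosed (convexHull ℝ ({x, y, z} : Set (Fin 3 → ℝ))) :=
      (Set.Finite.isCompact_convexHull ℝ (((Set.finite_singleton z).insert y).insert x)).isClosed
    rw [h2.closure_eq] at h1
    exact h1.symm
  -- x, y, z lattice points and extreme points of Q
  have hxE : x ∈ Set.extremePoints ℝ F := by rw [hEP]; simp
  have hyE : y ∈ Set.extremePoints ℝ F := by rw [hEP]; simp
  have hzE : z ∈ Set.extremePoints ℝ F := by rw [hEP]; simp
  have hxQ : x ∈ Set.extremePoints ℝ Q := extremePoints_face_subset hsupp hFeq hxE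
  have hyQ : y ∈ Set.extremePoints ℝ Q := extremePoints_face_subset hsupp hFeq hyE
  have hzQ : z ∈ Set.extremePoints ℝ Q := extremePoints_face_subset hsupp hFeq hzE
  have hlatof : ∀ v ∈ Set.extremePoints ℝ Q, IsLatticePoint v := by
    intro v hv
    have : v ∈ {w ∈ Q | IsLatticePoint w} := by
      rw [hterm]; exact Set.mem_insert_of_mem _ hv
    exact this.2
  have hxlat := hlatof x hxQ
  have hylat := hlatof y hyQ
  have hzlat := hlatof z hzQ
  have hxF : x ∈ F := hxE.1
  have hyF : y ∈ F := hyE.1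
  have hzF : z ∈ F := hzE.1
  have hFfacet : IsFacet Q F := ⟨⟨u, c, hsupp, hFeq⟩, hne, hrankF⟩
  -- 0 is not in F
  obtain ⟨u', hu'dual, hu'val⟩ := facet_dual hQ.2.1 (by norm_num) hFfacet
  have h0F : (0 : Fin 3 → ℝ) ∉ F := by
    intro h0
    have := hu'val 0 h0
    rw [dot_zero] at this
    norm_num at this
  -- rank condition
  have hrank : Module.finrank ℝ (vectorSpan ℝ (convexHull ℝ ({x, y, z} : Set (Fin 3 → ℝ)))) = 2 := by
    rw [← hKM]; exact hrankF
  -- emptiness condition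
  have hempty : {w ∈ convexHull ℝ ({x, y, z} : Set (Fin 3 → ℝ)) | IsLatticePoint w}
      = {x, y, z} := by
    ext w
    simp only [Set.mem_setOf_eq]
    constructor
    · rintro ⟨hwc, hwl⟩
      have hwF : w ∈ F := by rw [hKM]; exact hwc
      have hwQ : w ∈ Q := hFsubQ hwF
      have : w ∈ insert (0 : Fin 3 → ℝ) (Set.extremePoints ℝ Q) := by
        rw [← hterm]; exact ⟨hwQ, hwl⟩
      rcases this with rfl | hwE
      · exact absurd hwF h0F
      · have : w ∈ Set.extremePoints ℝ F := extremePoint_of_subset hFsubQ hwE hwF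
        rw [hEP] at this; exact this
    · rintro (rfl | rfl | rfl)
      · exact ⟨subset_convexHull ℝ _ (by simp), hxlat⟩
      · exact ⟨subset_convexHull ℝ _ (by simp), hylat⟩
      · exact ⟨subset_convexHull ℝ _ (by simp), hzlat⟩
  have hZ : IsZBasisFamily ![x, y, z] :=
    reverse_dir hQ hFfacet hxlat hylat hzlat hxF hyF hzF hrank hempty
  refine ⟨![x, y, z], ?_, hZ⟩
  rw [hEP]
  ext w
  simp [Matrix.range_cons, Matrix.range_empty]
  tauto

end Aux

/-- In a three-dimensional reflexive polytope, three lattice points in a common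
facet form a `ℤ`-basis of `ℤ³` iff their convex hull is a two-dimensional empty triangle;
consequently every three-dimensional simplicial terminal reflexive polytope is smooth. -/
theorem dim_three_basis_lemma (P : Set (Fin 3 → ℝ)) (hP : IsReflexive P) :
    (∀ x y z : Fin 3 → ℝ, IsLatticePoint x → IsLatticePoint y → IsLatticePoint z →
      (∃ F, IsFacet P F ∧ x ∈ F ∧ y ∈ F ∧ z ∈ F) →
      (IsZBasisFamily ![x, y, z] ↔
        (Module.finrank ℝ (vectorSpan ℝ (convexHull ℝ ({x, y, z} : Set (Fin 3 → ℝ)))) = 2 ∧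
          {w ∈ convexHull ℝ ({x, y, z} : Set (Fin 3 → ℝ)) | IsLatticePoint w} = {x, y, z}))) ∧
    (∀ Q : Set (Fin 3 → ℝ), IsReflexive Q → IsSimplicial Q → IsTerminalPolytope Q →
      IsSmoothPolytope Q) := by
  constructor
  · rintro x y z hx hy hz ⟨F, hF, hxF, hyF, hzF⟩
    constructor
    · exact fun hZ => Aux.forward_dir hZ
    · rintro ⟨hrank, hempty⟩
      exact Aux.reverse_dir hP hF hx hy hz hxF hyF hzF hrank hempty
  · intro Q hQ hsimp hterm
    exact Aux.part_two hQ hsimp hterm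

end
end

section
/- Let P ⊆ ℝ^d be a reflexive polytope and v a lattice point on the boundary of P. Then the star set st(v) equals the set of points x ∈ P such that x + λv ∉ P for all λ > 0; the projected polytope P_v := π_v(P) is a lattice polytope with respect to the quotient lattice ℤ^d/ℤv containing the origin in its interior; and the projection π_v restricts to a bijection from st(v) ∩ ℤ^d onto P_v ∩ (ℤ^d/ℤv). -/
open scoped BigOperators

noncomputable section

namespace StarAux

variable {d : ℕ}

lemma dotProd_comm (x y : Fin d → ℝ) : dotProd x y = dotProd y x := by
  unfold dotProd; exact Finset.sum_congr rfl fun i _ => mul_comm _ _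

/-- `dotProd m ·` as a linear map. -/
def dotL (m : Fin d → ℝ) : (Fin d → ℝ) →ₗ[ℝ] ℝ where
  toFun y := dotProd m y
  map_add' x y := by unfold dotProd; simp [mul_add, Finset.sum_add_distrib]
  map_smul' c x := by unfold dotProd; simp [Finset.mul_sum, mul_left_comm]

@[simp] lemma dotL_apply (m y : Fin d → ℝ) : dotL m y = dotProd m y := rfl

lemma dotProd_add_right (x y z : Fin d → ℝ) :
    dotProd x (y + z) = dotProd x y + dotProd x z := (dotL x).map_add y z

lemma dotProd_smul_right (c : ℝ) (x y : Fin d → ℝ) :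
    dotProd x (c • y) = c * dotProd x y := (dotL x).map_smul c y

lemma dotProd_add_left (x y z : Fin d → ℝ) :
    dotProd (x + y) z = dotProd x z + dotProd y z := by
  rw [dotProd_comm, dotProd_add_right, dotProd_comm z x, dotProd_comm z y]

lemma dotProd_smul_left (c : ℝ) (x y : Fin d → ℝ) :
    dotProd (c • x) y = c * dotProd x y := by
  rw [dotProd_comm, dotProd_smul_right, dotProd_comm]

@[simp] lemma dotProd_zero_right (x : Fin d → ℝ) : dotProd x 0 = 0 := by
  unfold dotProd; simp

@[simp] lemma dotProd_zero_left (x : Fin d → ℝ) : dotProd 0 x = 0 := by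
  unfold dotProd; simp

lemma dotProd_neg_right (x y : Fin d → ℝ) : dotProd x (-y) = -dotProd x y := by
  unfold dotProd; simp [Finset.sum_neg_distrib]

lemma dotProd_neg_left (x y : Fin d → ℝ) : dotProd (-x) y = -dotProd x y := by
  rw [dotProd_comm, dotProd_neg_right, dotProd_comm]

lemma dotProd_sub_left (x y z : Fin d → ℝ) :
    dotProd (x - y) z = dotProd x z - dotProd y z := by
  rw [sub_eq_add_neg, dotProd_add_left, ← neg_one_smul ℝ y, dotProd_smul_left]; ring

lemma continuous_dotProd_left (u : Fin d → ℝ) : Continuous fun x => dotProd x u := by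
  unfold dotProd
  exact continuous_finset_sum _ fun i _ => (continuous_apply i).mul continuous_const

lemma dotProd_self_pos {u : Fin d → ℝ} (hu : u ≠ 0) : 0 < dotProd u u := by
  unfold dotProd
  have h1 : ∀ i ∈ Finset.univ, (0:ℝ) ≤ u i * u i := fun i _ => mul_self_nonneg _
  obtain ⟨i, hi⟩ : ∃ i, u i ≠ 0 := by
    by_contra h; push_neg at h; exact hu (funext h)
  refine Finset.sum_pos' h1 ⟨i, Finset.mem_univ i, ?_⟩
  exact lt_of_le_of_ne (mul_self_nonneg _) (Ne.symm (mul_self_ne_zero.2 hi))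

lemma dotProd_int {x y : Fin d → ℝ} (hx : IsLatticePoint x) (hy : IsLatticePoint y) :
    ∃ n : ℤ, dotProd x y = (n : ℝ) := by
  choose a ha using hx
  choose b hb using hy
  refine ⟨∑ i, a i * b i, ?_⟩
  unfold dotProd
  push_cast
  exact Finset.sum_congr rfl fun i _ => by rw [ha i, hb i]

/-- helper: uniform small ε for finitely many strict constraints. -/
lemma exists_eps {α : Type*} (s : Finset α) (f g : α → ℝ) (hf : ∀ a ∈ s, 0 < f a) :
    ∃ ε : ℝ, 0 < ε ∧ ∀ a ∈ s, ε * |g a| ≤ f a := by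
  classical
  induction s using Finset.induction with
  | empty => exact ⟨1, one_pos, by simp⟩
  | @insert a s ha ih =>
    obtain ⟨ε, hε, h⟩ := ih (fun b hb => hf b (Finset.mem_insert_of_mem hb))
    have hfa : 0 < f a := hf a (Finset.mem_insert_self a s)
    refine ⟨min ε (f a / (|g a| + 1)), lt_min hε (by positivity), ?_⟩
    intro b hb
    rcases Finset.mem_insert.1 hb with rfl | hb
    · calc min ε (f b / (|g b| + 1)) * |g b| ≤ (f b / (|g b| + 1)) * |g b| := by
            apply mul_le_mul_of_nonneg_right (min_le_right _ _) (abs_nonneg _)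
        _ ≤ f b := by
            rw [div_mul_eq_mul_div, div_le_iff₀ (by positivity)]
            nlinarith [abs_nonneg (g b), hfa]
    · calc min ε (f a / (|g a| + 1)) * |g b| ≤ ε * |g b| := by
            apply mul_le_mul_of_nonneg_right (min_le_left _ _) (abs_nonneg _)
        _ ≤ f b := h b hb

lemma mem_of_forall_dual {P : Set (Fin d → ℝ)} {W : Finset (Fin d → ℝ)}
    (hW : dualPolytope P = convexHull ℝ (W : Set (Fin d → ℝ)))
    (hPc : Convex ℝ P) (hPcl : IsClosed P) (h0 : (0 : Fin d → ℝ) ∈ P)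
    {x : Fin d → ℝ} (hx : ∀ u ∈ W, -1 ≤ dotProd x u) : x ∈ P := by
  by_contra hxP
  obtain ⟨f, c, hfP, hfx⟩ := geometric_hahn_banach_closed_point hPc hPcl hxP
  have hc : 0 < c := by have := hfP 0 h0; simpa using this
  set w : Fin d → ℝ := fun i => f (fun j => if i = j then 1 else 0) with hwdef
  have hfw : ∀ a : Fin d → ℝ, f a = dotProd a w := by
    intro a
    have ha := pi_eq_sum_univ a
    calc f a = f (∑ i, a i • fun j => if i = j then (1:ℝ) else 0) := by rw [← pi_eq_sum_univ a]
      _ = ∑ i, a i * w i := by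
          rw [map_sum]
          refine Finset.sum_congr rfl fun i _ => ?_
          rw [map_smul]; simp [hwdef]
      _ = dotProd a w := rfl
  set u₀ : Fin d → ℝ := (-(1/c)) • w with hu₀def
  have hyu₀ : ∀ y : Fin d → ℝ, dotProd y u₀ = -(1/c) * f y := by
    intro y
    rw [hu₀def, dotProd_smul_right, ← hfw]
  have hu₀ : u₀ ∈ dualPolytope P := by
    intro y hy
    have h1 := hfP y hy
    rw [hyu₀ y]
    rw [neg_mul, le_neg, ← neg_neg ((1/c) * f y)]
    have : (1/c) * f y ≤ (1/c) * c := by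
      apply mul_le_mul_of_nonneg_left h1.le (by positivity)
    rw [one_div_mul_cancel (ne_of_gt hc)] at this
    linarith
  rw [hW] at hu₀
  have hhalf : u₀ ∈ {u : Fin d → ℝ | -1 ≤ dotProd x u} := by
    have hconv : Convex ℝ {u : Fin d → ℝ | -1 ≤ dotProd x u} :=
      convex_halfSpace_ge (dotL x).isLinear (-1)
    exact convexHull_min (fun u hu => hx u hu) hconv hu₀
  have h2 : dotProd x u₀ = -(1/c) * f x := hyu₀ x
  have h3 : -(1:ℝ) ≤ -(1/c) * f x := h2 ▸ hhalf
  have h4 : (1/c) * c < (1/c) * f x := by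
    apply mul_lt_mul_of_pos_left hfx (by positivity)
  rw [one_div_mul_cancel (ne_of_gt hc)] at h4
  nlinarith

lemma rep_eq {P : Set (Fin d → ℝ)} {W : Finset (Fin d → ℝ)}
    (hW : dualPolytope P = convexHull ℝ (W : Set (Fin d → ℝ)))
    (hPc : Convex ℝ P) (hPcl : IsClosed P) (h0 : (0 : Fin d → ℝ) ∈ P) :
    P = {x | ∀ u ∈ W, -1 ≤ dotProd x u} := by
  apply subset_antisymm
  · intro x hx u hu
    have : u ∈ dualPolytope P := by
      rw [hW]; exact subset_convexHull ℝ _ hu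
    exact this x hx
  · intro x hx
    exact mem_of_forall_dual hW hPc hPcl h0 hx

/-- If there is no common tight lattice constraint for `x` and `v`, one can move from `x`
in direction `v` while staying in `P`. -/
lemma exists_move {P : Set (Fin d → ℝ)} {W : Finset (Fin d → ℝ)}
    (hrep : P = {x | ∀ u ∈ W, -1 ≤ dotProd x u})
    (hWlat : ∀ u ∈ W, IsLatticePoint u)
    {x v : Fin d → ℝ} (hx : x ∈ P) (hvP : v ∈ P) (hvL : IsLatticePoint v)
    (h : ¬ ∃ u ∈ W, dotProd x u = -1 ∧ dotProd v u = -1) :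
    ∃ l : ℝ, 0 < l ∧ x + l • v ∈ P := by
  classical
  push_neg at h
  obtain ⟨ε, hε, hεle⟩ := exists_eps (W.filter (fun u => dotProd x u ≠ -1))
    (fun u => dotProd x u + 1) (fun u => dotProd v u)
    (by
      intro u hu
      rw [Finset.mem_filter] at hu
      show (0:ℝ) < dotProd x u + 1
      have h1 : -1 ≤ dotProd x u := by rw [hrep] at hx; exact hx u hu.1
      have := hu.2
      cases lt_or_eq_of_le h1 with
      | inl h2 => linarith
      | inr h2 => exact absurd h2.symm this)
  refine ⟨ε, hε, ?_⟩
  rw [hrep]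
  intro u hu
  rw [dotProd_add_left, dotProd_smul_left]
  by_cases hxt : dotProd x u = -1
  · -- tight constraint: then dotProd v u ≥ 0
    have hvu : -1 ≤ dotProd v u := by rw [hrep] at hvP; exact hvP u hu
    have hne : dotProd v u ≠ -1 := fun hv => h u hu hxt hv
    obtain ⟨n, hn⟩ := dotProd_int hvL (hWlat u hu)
    have hn1 : (-1:ℝ) ≤ (n:ℝ) := hn ▸ hvu
    have hn2 : (n:ℝ) ≠ -1 := hn ▸ hne
    have hnge : (0:ℝ) ≤ (n:ℝ) := by
      have : (-1:ℤ) ≤ n := by exact_mod_cast hn1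
      have : (-1:ℤ) ≠ n := fun hh => hn2 (by rw [← hh]; norm_num)
      have : (0:ℤ) ≤ n := by omega
      exact_mod_cast this
    have : 0 ≤ ε * dotProd v u := mul_nonneg hε.le (hn ▸ hnge)
    linarith [hxt]
  · have hmem : u ∈ W.filter (fun u => dotProd x u ≠ -1) := Finset.mem_filter.2 ⟨hu, hxt⟩
    have h1 := hεle u hmem
    have h2 : ε * dotProd v u ≥ -(dotProd x u + 1) := by
      have : -(ε * |dotProd v u|) ≤ ε * dotProd v u := by
        have := neg_abs_le (dotProd v u)
        nlinarith [hε.le, abs_nonneg (dotProd v u)]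
      linarith
    linarith

/-- Key: if one cannot move from `x` in direction `v` at all, there is a common tight
lattice constraint. -/
lemma exists_tight_pair {P : Set (Fin d → ℝ)} {W : Finset (Fin d → ℝ)}
    (hrep : P = {x | ∀ u ∈ W, -1 ≤ dotProd x u})
    (hWlat : ∀ u ∈ W, IsLatticePoint u)
    {x v : Fin d → ℝ} (hx : x ∈ P) (hvP : v ∈ P) (hvL : IsLatticePoint v)
    (hmove : ∀ l : ℝ, 0 < l → x + l • v ∉ P) :
    ∃ u ∈ W, dotProd x u = -1 ∧ dotProd v u = -1 := by
  by_contra h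
  obtain ⟨l, hl, hmem⟩ := exists_move hrep hWlat hx hvP hvL h
  exact hmove l hl hmem

lemma convex_dual {P : Set (Fin d → ℝ)} : Convex ℝ (dualPolytope P) := by
  intro u1 hu1 u2 hu2 a b ha hb hab
  intro y hy
  rw [dotProd_add_right, dotProd_smul_right, dotProd_smul_right]
  nlinarith [hu1 y hy, hu2 y hy]

lemma isLinear_dotProd_left (q : Fin d → ℝ) : IsLinearMap ℝ (fun z : Fin d → ℝ => dotProd z q) :=
  ⟨fun a b => dotProd_add_left a b q, fun c a => dotProd_smul_left c a q⟩

/-- Main geometric lemma: given `m ∈ P` tight at some dual point, there is an extreme dual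
point `u'` tight at `m` whose tight set is a facet of `P`. -/
lemma exists_facet {P : Set (Fin d → ℝ)} {V W : Finset (Fin d → ℝ)}
    (hPV : P = convexHull ℝ (V : Set (Fin d → ℝ)))
    (hW : dualPolytope P = convexHull ℝ (W : Set (Fin d → ℝ)))
    {m : Fin d → ℝ} (hm : m ∈ P) {u₀ : Fin d → ℝ} (hu₀ : u₀ ∈ dualPolytope P)
    (ht : dotProd m u₀ = -1) :
    ∃ u', u' ∈ dualPolytope P ∧ dotProd m u' = -1 ∧
      IsFacet P {x ∈ P | dotProd x u' = -1} := by
  classical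
  have hd : 0 < d := by
    rcases Nat.eq_zero_or_pos d with h | h
    · exfalso; subst h; unfold dotProd at ht; simp at ht
    · exact h
  have hdcomp : IsCompact (dualPolytope P) := by
    rw [hW]; exact W.finite_toSet.isCompact_convexHull ℝ
  -- the set D of dual points tight at m
  set D : Set (Fin d → ℝ) := dualPolytope P ∩ {u | dotProd m u = -1} with hDdef
  have hDconv : Convex ℝ D := by
    apply Convex.inter convex_dual
    intro u1 hu1 u2 hu2 a b ha hb hab
    show dotProd m (a • u1 + b • u2) = -1
    rw [dotProd_add_right, dotProd_smul_right, dotProd_smul_right]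
    rw [Set.mem_setOf_eq] at hu1 hu2
    rw [hu1, hu2]; ring_nf; linarith
  have hcont : Continuous fun u : Fin d → ℝ => dotProd m u := (dotL m).continuous_of_finiteDimensional
  have hDcomp : IsCompact D := hdcomp.inter_right (isClosed_eq hcont continuous_const)
  have hDne : D.Nonempty := ⟨u₀, hu₀, ht⟩
  obtain ⟨u', hu'⟩ := hDcomp.extremePoints_nonempty hDne
  obtain ⟨⟨hu'dual, hu'tight⟩, hu'ext⟩ := mem_extremePoints.1 hu'
  rw [Set.mem_setOf_eq] at hu'tight
  -- u' is extreme in the dual polytope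
  have hext : u' ∈ (dualPolytope P).extremePoints ℝ := by
    rw [mem_extremePoints]
    refine ⟨hu'dual, ?_⟩
    intro x1 hx1 x2 hx2 hseg
    obtain ⟨a, b, ha, hb, hab, hsum⟩ := hseg
    have hp : -1 ≤ dotProd m x1 := hx1 m hm
    have hq : -1 ≤ dotProd m x2 := hx2 m hm
    have hcomb : a * dotProd m x1 + b * dotProd m x2 = -1 := by
      rw [← dotProd_smul_right, ← dotProd_smul_right, ← dotProd_add_right, hsum, hu'tight]
    have hp1 : dotProd m x1 = -1 := by nlinarith
    have hq1 : dotProd m x2 = -1 := by nlinarith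
    exact hu'ext x1 ⟨hx1, hp1⟩ x2 ⟨hx2, hq1⟩ ⟨a, b, ha, hb, hab, hsum⟩
  refine ⟨u', hu'dual, hu'tight, ?_, ⟨m, hm, hu'tight⟩, ?_⟩
  · -- IsFace
    refine ⟨-u', 1, ?_, ?_⟩
    · intro x hx
      rw [dotProd_neg_left, dotProd_comm]
      have := hu'dual x hx
      linarith
    · ext x
      simp only [Set.mem_setOf_eq, dotProd_neg_left]
      rw [dotProd_comm u' x]
      constructor
      · rintro ⟨h1, h2⟩; exact ⟨h1, by linarith⟩
      · rintro ⟨h1, h2⟩; exact ⟨h1, by linarith⟩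
  · -- rank computation
    set F : Set (Fin d → ℝ) := {x ∈ P | dotProd x u' = -1} with hFdef
    have hmF : m ∈ F := ⟨hm, hu'tight⟩
    -- upper bound
    have hker : vectorSpan ℝ F ≤ LinearMap.ker (dotL u') := by
      rw [vectorSpan_def]
      apply Submodule.span_le.2
      rintro z ⟨p, hp, q, hq, rfl⟩
      have hp2 : dotProd p u' = -1 := hp.2
      have hq2 : dotProd q u' = -1 := hq.2
      simp only [SetLike.mem_coe, LinearMap.mem_ker, vsub_eq_sub]
      rw [map_sub]
      simp only [dotL_apply]
      rw [dotProd_comm u' p, dotProd_comm u' q, hp2, hq2]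
      ring
    have hu'ne : u' ≠ 0 := by
      intro h; rw [h] at hu'tight; simp at hu'tight
    have hrange : LinearMap.range (dotL u') = ⊤ := by
      rw [LinearMap.range_eq_top]
      intro r
      refine ⟨(r / dotProd u' u') • u', ?_⟩
      rw [map_smul]
      simp only [dotL_apply, smul_eq_mul]
      field_simp [ne_of_gt (dotProd_self_pos hu'ne)]
    have hkerrank : Module.finrank ℝ (LinearMap.ker (dotL u')) = d - 1 := by
      have h1 := LinearMap.finrank_range_add_finrank_ker (dotL u')
      rw [hrange, finrank_top, Module.finrank_self, Module.finrank_fin_fun] at h1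
      omega
    have hup : Module.finrank ℝ (vectorSpan ℝ F) ≤ d - 1 := by
      rw [← hkerrank]; exact Submodule.finrank_mono hker
    -- lower bound, by contradiction
    by_contra hne'
    have hsmall : Module.finrank ℝ (vectorSpan ℝ F) + 2 ≤ d := by omega
    set V'' : Finset (Fin d → ℝ) := V.filter (fun a => dotProd a u' = -1) with hV''def
    have hVP : (V : Set (Fin d → ℝ)) ⊆ P := by rw [hPV]; exact subset_convexHull ℝ _
    have hV''F : ∀ a ∈ V'', a ∈ F := by
      intro a ha
      rw [hV''def, Finset.mem_filter] at ha
      exact ⟨hVP ha.1, ha.2⟩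
    have hspan : Submodule.span ℝ (V'' : Set (Fin d → ℝ)) ≤
        vectorSpan ℝ F ⊔ Submodule.span ℝ {m} := by
      apply Submodule.span_le.2
      intro a ha
      have haF : a ∈ F := hV''F a ha
      have h1 : a - m ∈ vectorSpan ℝ F := vsub_mem_vectorSpan ℝ haF hmF
      have h2 : a = (a - m) + m := by ring
      rw [h2]
      exact Submodule.add_mem _ (Submodule.mem_sup_left h1)
        (Submodule.mem_sup_right (Submodule.mem_span_singleton_self m))
    have hmrank : Module.finrank ℝ (Submodule.span ℝ ({m} : Set (Fin d → ℝ))) ≤ 1 := by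
      by_cases hm0 : m = 0
      · rw [hm0, Submodule.span_zero_singleton, finrank_bot]; omega
      · rw [finrank_span_singleton hm0]
    have hsuprank := Submodule.finrank_sup_add_finrank_inf_eq (vectorSpan ℝ F)
      (Submodule.span ℝ ({m} : Set (Fin d → ℝ)))
    have hsprank : Module.finrank ℝ (Submodule.span ℝ (V'' : Set (Fin d → ℝ))) ≤ d - 1 := by
      have h1 := Submodule.finrank_mono hspan
      omega
    -- orthogonal vector via Euclidean space
    set L : (Fin d → ℝ) ≃ₗ[ℝ] EuclideanSpace ℝ (Fin d) :=
      (WithLp.linearEquiv 2 ℝ (Fin d → ℝ)).symm with hLdef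
    set K : Submodule ℝ (EuclideanSpace ℝ (Fin d)) :=
      Submodule.map (L : (Fin d → ℝ) →ₗ[ℝ] EuclideanSpace ℝ (Fin d))
        (Submodule.span ℝ (V'' : Set (Fin d → ℝ))) with hKdef
    have hKrank : Module.finrank ℝ K = Module.finrank ℝ (Submodule.span ℝ (V'' : Set (Fin d → ℝ))) :=
      LinearEquiv.finrank_map_eq L _
    have hKne : K ≠ ⊤ := by
      intro h
      rw [h, finrank_top, finrank_euclideanSpace_fin] at hKrank
      omega
    have hKorth : Kᗮ ≠ ⊥ := by
      rw [ne_eq, Submodule.orthogonal_eq_bot_iff]; exact hKne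
    obtain ⟨w', hw'K, hw'ne⟩ := (Submodule.ne_bot_iff _).1 hKorth
    set w : Fin d → ℝ := L.symm w' with hwdef
    have hwne : w ≠ 0 := by
      intro h
      apply hw'ne
      rw [← LinearEquiv.apply_symm_apply L w', ← hwdef, h, map_zero]
    have hLw : L w = w' := by rw [hwdef, LinearEquiv.apply_symm_apply]
    have hwcoord : ∀ i, w' i = w i := by
      intro i
      rw [← hLw, hLdef]
      rfl
    have horth : ∀ a ∈ V'', dotProd a w = 0 := by
      intro a ha
      have haK : L a ∈ K := Submodule.mem_map_of_mem (Submodule.subset_span ha)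
      have h1 : (inner ℝ (L a) w' : ℝ) = 0 := (Submodule.mem_orthogonal K w').1 hw'K (L a) haK
      rw [PiLp.inner_apply] at h1
      unfold dotProd
      rw [← h1]
      refine Finset.sum_congr rfl fun i _ => ?_
      rw [RCLike.inner_apply', RCLike.conj_to_real]
      rw [hwcoord i]
      have : (L a) i = a i := rfl
      rw [this]
    -- epsilon
    obtain ⟨ε, hε, hεle⟩ := exists_eps (V \ V'') (fun a => dotProd a u' + 1)
      (fun a => dotProd a w)
      (by
        intro a ha
        rw [Finset.mem_sdiff] at ha
        have h1 : -1 ≤ dotProd a u' := hu'dual a (hVP ha.1)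
        have h2 : dotProd a u' ≠ -1 := by
          intro h
          exact ha.2 (Finset.mem_filter.2 ⟨ha.1, h⟩)
        show (0:ℝ) < dotProd a u' + 1
        cases lt_or_eq_of_le h1 with
        | inl h3 => linarith
        | inr h3 => exact absurd h3.symm h2)
    have hpm : ∀ σ : ℝ, |σ| = 1 → u' + (σ * ε) • w ∈ dualPolytope P := by
      intro σ hσ y hy
      have hhalf : Convex ℝ {z : Fin d → ℝ | -1 ≤ dotProd z (u' + (σ * ε) • w)} :=
        convex_halfSpace_ge (isLinear_dotProd_left _) (-1)
      have hsub : P ⊆ {z : Fin d → ℝ | -1 ≤ dotProd z (u' + (σ * ε) • w)} := by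
        rw [hPV]
        apply convexHull_min ?_ hhalf
        intro a haV
        show -1 ≤ dotProd a (u' + (σ * ε) • w)
        rw [dotProd_add_right, dotProd_smul_right]
        by_cases haV'' : a ∈ V''
        · have h1 : dotProd a u' = -1 := (Finset.mem_filter.1 haV'').2
          rw [h1, horth a haV'']
          ring_nf
          exact le_refl _
        · have hmem : a ∈ V \ V'' := Finset.mem_sdiff.2 ⟨haV, haV''⟩
          have h1 := hεle a hmem
          have h2 : σ * ε * dotProd a w ≥ -(ε * |dotProd a w|) := by
            have habs : |σ * ε * dotProd a w| = ε * |dotProd a w| := by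
              rw [abs_mul, abs_mul, hσ, abs_of_pos hε]; ring
            have := neg_abs_le (σ * ε * dotProd a w)
            rw [habs] at this
            exact this
          have h3 : (0:ℝ) < dotProd a u' + 1 := by
            have h4 : -1 ≤ dotProd a u' := hu'dual a (hVP haV)
            have h5 : dotProd a u' ≠ -1 := fun h =>
              (Finset.mem_sdiff.1 hmem).2 (Finset.mem_filter.2 ⟨haV, h⟩)
            cases lt_or_eq_of_le h4 with
            | inl h6 => linarith
            | inr h6 => exact absurd h6.symm h5
          linarith
      exact hsub hy
    have h1 := hpm 1 (by norm_num)
    have h2 := hpm (-1) (by norm_num)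
    have hseg : u' ∈ openSegment ℝ (u' + (1 * ε) • w) (u' + ((-1) * ε) • w) := by
      refine ⟨1/2, 1/2, by norm_num, by norm_num, by norm_num, ?_⟩
      module
    rw [mem_extremePoints] at hext
    obtain ⟨-, hext2⟩ := hext
    obtain ⟨heq1, -⟩ := hext2 (u' + (1 * ε) • w) h1 (u' + ((-1) * ε) • w) h2 hseg
    have h3 : (1 * ε) • w = 0 := by
      have := congrArg (fun z => z - u') heq1
      simpa using this
    rw [one_mul] at h3
    exact hwne ((smul_eq_zero.1 h3).resolve_left (ne_of_gt hε))

lemma star_forward {P : Set (Fin d → ℝ)} (h0 : (0:Fin d → ℝ) ∈ interior P) (hd : 0 < d)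
    {v x : Fin d → ℝ} (hx : x ∈ starSet P v) : x ∈ P ∧ ∀ l : ℝ, 0 < l → x + l • v ∉ P := by
  obtain ⟨F, ⟨⟨u, c, hbound, hFeq⟩, hFne, hFrank⟩, hvF, hxF⟩ := hx
  subst hFeq
  refine ⟨hxF.1, ?_⟩
  intro l hl hmem
  have h0P : (0 : Fin d → ℝ) ∈ P := interior_subset h0
  have hc0 : 0 ≤ c := by have := hbound 0 h0P; simpa using this
  have hux : dotProd u x = c := hxF.2
  have huv : dotProd u v = c := hvF.2
  have h1 : dotProd u (x + l • v) ≤ c := hbound _ hmem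
  rw [dotProd_add_right, dotProd_smul_right, hux, huv] at h1
  have hcle : c ≤ 0 := by nlinarith
  have hc : c = 0 := le_antisymm hcle hc0
  obtain ⟨ε, hε, hball⟩ := Metric.isOpen_iff.1 isOpen_interior 0 h0
  have hu0 : u = 0 := by
    by_contra hu
    have hnorm : 0 < ‖u‖ := norm_pos_iff.2 hu
    set y : Fin d → ℝ := (ε / (2 * ‖u‖)) • u with hydef
    have hnormy : ‖y‖ = ε / 2 := by
      rw [hydef, norm_smul, Real.norm_eq_abs, abs_of_pos (by positivity)]
      field_simp
    have hy : y ∈ P := by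
      apply interior_subset (hball ?_)
      rw [Metric.mem_ball, dist_zero_right, hnormy]
      linarith
    have hb := hbound y hy
    rw [hydef, dotProd_smul_right, hc] at hb
    have hpos : 0 < ε / (2 * ‖u‖) * dotProd u u :=
      mul_pos (by positivity) (dotProd_self_pos hu)
    linarith
  have hFP : {x ∈ P | dotProd u x = c} = P := by
    rw [hu0, hc]; ext z; simp [dotProd_zero_left]
  rw [hFP] at hFrank
  have htop : vectorSpan ℝ P = ⊤ := by
    rw [Submodule.eq_top_iff']
    intro z
    by_cases hz : z = 0
    · rw [hz]; exact Submodule.zero_mem _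
    · have hnz : 0 < ‖z‖ := norm_pos_iff.2 hz
      have hnormy : ‖(ε / (2 * ‖z‖)) • z‖ = ε / 2 := by
        rw [norm_smul, Real.norm_eq_abs, abs_of_pos (by positivity)]
        field_simp
      have hy : (ε / (2 * ‖z‖)) • z ∈ P := by
        apply interior_subset (hball ?_)
        rw [Metric.mem_ball, dist_zero_right, hnormy]
        linarith
      have hsub : (ε / (2 * ‖z‖)) • z -ᵥ (0:Fin d → ℝ) ∈ vectorSpan ℝ P :=
        vsub_mem_vectorSpan ℝ hy h0P
      have hsm := Submodule.smul_mem _ ((2 * ‖z‖)/ε) hsub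
      have : ((2 * ‖z‖)/ε) • ((ε / (2 * ‖z‖)) • z -ᵥ (0:Fin d → ℝ)) = z := by
        rw [vsub_eq_sub, sub_zero, smul_smul]
        rw [div_mul_div_comm, mul_comm ε, div_self (by positivity)]
        rw [one_smul]
      rwa [this] at hsm
  rw [htop, finrank_top, Module.finrank_fin_fun] at hFrank
  omega

lemma star_backward {P : Set (Fin d → ℝ)} {V W : Finset (Fin d → ℝ)}
    (hPV : P = convexHull ℝ (V : Set (Fin d → ℝ)))
    (hW : dualPolytope P = convexHull ℝ (W : Set (Fin d → ℝ)))
    (hrep : P = {x | ∀ u ∈ W, -1 ≤ dotProd x u})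
    (hWlat : ∀ u ∈ W, IsLatticePoint u)
    {v : Fin d → ℝ} (hvP : v ∈ P) (hvL : IsLatticePoint v)
    {x : Fin d → ℝ} (hx : x ∈ P) (hmove : ∀ l : ℝ, 0 < l → x + l • v ∉ P) :
    SameFacet P v x := by
  obtain ⟨u, huW, hxu, hvu⟩ := exists_tight_pair hrep hWlat hx hvP hvL hmove
  have hPconv : Convex ℝ P := by rw [hPV]; exact convex_convexHull ℝ _
  set m : Fin d → ℝ := ((1:ℝ)/2) • x + ((1:ℝ)/2) • v with hmdef
  have hmP : m ∈ P := hPconv hx hvP (by norm_num) (by norm_num) (by norm_num)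
  have hmu : dotProd m u = -1 := by
    rw [hmdef, dotProd_add_left, dotProd_smul_left, dotProd_smul_left, hxu, hvu]; norm_num
  have huDual : u ∈ dualPolytope P := by rw [hW]; exact subset_convexHull ℝ _ huW
  obtain ⟨u', hu'dual, hu'tight, hFacet⟩ := exists_facet hPV hW hmP huDual hmu
  have h1 : -1 ≤ dotProd x u' := hu'dual x hx
  have h2 : -1 ≤ dotProd v u' := hu'dual v hvP
  have h3 : dotProd m u' = (1/2) * dotProd x u' + (1/2) * dotProd v u' := by
    rw [hmdef, dotProd_add_left, dotProd_smul_left, dotProd_smul_left]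
  have hxu' : dotProd x u' = -1 := by nlinarith [hu'tight]
  have hvu' : dotProd v u' = -1 := by nlinarith [hu'tight]
  exact ⟨_, hFacet, ⟨hvP, hvu'⟩, ⟨hx, hxu'⟩⟩

end StarAux

/-- For a reflexive polytope `P` and a boundary lattice point `v`, the star set
of `v` equals `{x ∈ P | x + λv ∉ P for all λ > 0}`, the projection `P_v = π_v(P)` is a lattice
polytope (w.r.t. the quotient lattice `ℤ^d/ℤv`) with `0` in its interior, and `π_v` restricts
to a bijection from `st(v) ∩ ℤ^d` onto `P_v ∩ (ℤ^d/ℤv)`. -/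
theorem projection_along_boundary_lattice_point {d : ℕ} (P : Set (Fin d → ℝ))
    (hP : IsReflexive P) (v : Fin d → ℝ) (hv : v ∈ frontier P) (hvL : IsLatticePoint v) :
    starSet P v = {x ∈ P | ∀ l : ℝ, 0 < l → x + l • v ∉ P} ∧
    (∃ V : Finset (QuotSpace v), (∀ q ∈ V, q ∈ quotLattice v) ∧
      projAlong v '' P = convexHull ℝ (V : Set (QuotSpace v))) ∧
    (0 : QuotSpace v) ∈ interior (projAlong v '' P) ∧
    Set.BijOn (projAlong v) {x ∈ starSet P v | IsLatticePoint x}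
      {q ∈ projAlong v '' P | q ∈ quotLattice v} := by
  classical
  obtain ⟨⟨V, hVlat, hPV⟩, h0, ⟨W, hWlat, hW⟩⟩ := hP
  have hPconv : Convex ℝ P := by rw [hPV]; exact convex_convexHull ℝ _
  have hPcomp : IsCompact P := by rw [hPV]; exact V.finite_toSet.isCompact_convexHull ℝ
  have hPcl : IsClosed P := hPcomp.isClosed
  have h0P : (0 : Fin d → ℝ) ∈ P := interior_subset h0
  have hrep : P = {x | ∀ u ∈ W, -1 ≤ dotProd x u} := StarAux.rep_eq hW hPconv hPcl h0P
  rw [hPcl.frontier_eq] at hv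
  have hvP : v ∈ P := hv.1
  have hv0 : v ≠ 0 := by
    intro h
    exact hv.2 (h ▸ h0)
  have hd : 0 < d := by
    rcases Nat.eq_zero_or_pos d with h | h
    · exfalso
      apply hv0
      funext i
      exact absurd i.isLt (by omega)
    · exact h
  -- Part 1 : star set characterization
  have hstar : starSet P v = {x ∈ P | ∀ l : ℝ, 0 < l → x + l • v ∉ P} := by
    ext x
    constructor
    · intro hx
      exact StarAux.star_forward h0 hd hx
    · rintro ⟨hxP, hmove⟩
      exact StarAux.star_backward hPV hW hrep hWlat hvP hvL hxP hmove
  refine ⟨hstar, ?_, ?_, ?_, ?_, ?_⟩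
  -- Part 2 : lattice polytope in the quotient
  · refine ⟨V.image (projAlong v), ?_, ?_⟩
    · intro q hq
      obtain ⟨a, haV, rfl⟩ := Finset.mem_image.1 hq
      exact ⟨a, hVlat a haV, rfl⟩
    · rw [hPV, Finset.coe_image]
      exact LinearMap.image_convexHull _ _
  -- Part 3 : 0 in the interior of the projection
  · have hopen : IsOpen (projAlong v '' interior P) :=
      (Submodule.isOpenMap_mkQ _) _ isOpen_interior
    have hsub : projAlong v '' interior P ⊆ projAlong v '' P :=
      Set.image_mono interior_subset
    have h0' : (0 : QuotSpace v) ∈ projAlong v '' interior P := ⟨0, h0, map_zero _⟩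
    exact interior_maximal hsub hopen h0'
  -- Part 4 : bijection, MapsTo
  · rintro x ⟨hxs, hxL⟩
    rw [hstar] at hxs
    exact ⟨⟨x, hxs.1, rfl⟩, ⟨x, hxL, rfl⟩⟩
  -- InjOn
  · rintro x ⟨hxs, hxL⟩ x' ⟨hx's, hx'L⟩ hpi
    rw [hstar] at hxs hx's
    have hker : x - x' ∈ Submodule.span ℝ {v} := by
      rw [← Submodule.ker_mkQ (Submodule.span ℝ {v}), LinearMap.mem_ker, map_sub]
      show projAlong v x - projAlong v x' = 0
      rw [hpi, sub_self]
    obtain ⟨t, ht⟩ := Submodule.mem_span_singleton.1 hker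
    have hxx' : x = x' + t • v := by rw [ht]; abel
    rcases lt_trichotomy t 0 with htl | hte | htg
    · exfalso
      apply hxs.2 (-t) (by linarith)
      have h2 : x + (-t) • v = x' := by rw [hxx']; module
      rw [h2]; exact hx's.1
    · rw [hxx', hte, zero_smul, add_zero]
    · exfalso
      apply hx's.2 t htg
      rw [← hxx']
      exact hxs.1
  -- SurjOn
  · rintro q ⟨⟨y, hyP, hyq⟩, z, hzL, hzq⟩
    have hker : z - y ∈ Submodule.span ℝ {v} := by
      rw [← Submodule.ker_mkQ (Submodule.span ℝ {v}), LinearMap.mem_ker, map_sub]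
      show projAlong v z - projAlong v y = 0
      rw [hyq, hzq, sub_self]
    obtain ⟨s, hs⟩ := Submodule.mem_span_singleton.1 hker
    set A : Set ℝ := {l : ℝ | z + l • v ∈ P} with hAdef
    have hAne : A.Nonempty := by
      refine ⟨-s, ?_⟩
      show z + (-s) • v ∈ P
      have h1 : z + (-s) • v = y := by
        have h2 : z - y = s • v := hs.symm
        have h3 : z = y + s • v := by rw [← h2]; abel
        rw [h3]; module
      rw [h1]; exact hyP
    have hAcl : IsClosed A := by
      have h1 : A = (fun l : ℝ => z + l • v) ⁻¹' P := rfl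
      rw [h1]
      exact hPcl.preimage (continuous_const.add (continuous_id.smul continuous_const))
    have hvnorm : 0 < ‖v‖ := norm_pos_iff.2 hv0
    have hAbdd : BddAbove A := by
      obtain ⟨R, hR⟩ := isBounded_iff_forall_norm_le.1 hPcomp.isBounded
      refine ⟨(R + ‖z‖)/‖v‖, ?_⟩
      intro l hl
      have h1 := hR _ hl
      have h2 : ‖l • v‖ ≤ R + ‖z‖ := by
        have h3 : ‖l • v‖ = ‖(z + l • v) - z‖ := by congr 1; abel
        rw [h3]
        calc ‖(z + l • v) - z‖ ≤ ‖z + l • v‖ + ‖z‖ := norm_sub_le _ _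
          _ ≤ R + ‖z‖ := by linarith
      rw [norm_smul, Real.norm_eq_abs] at h2
      rw [le_div_iff₀ hvnorm]
      calc l * ‖v‖ ≤ |l| * ‖v‖ := by
            apply mul_le_mul_of_nonneg_right (le_abs_self l) (norm_nonneg v)
        _ ≤ R + ‖z‖ := h2
    set l' := sSup A with hl'def
    have hl'A : l' ∈ A := hAcl.csSup_mem hAne hAbdd
    set x := z + l' • v with hxdef
    have hxP : x ∈ P := hl'A
    have hmove : ∀ l : ℝ, 0 < l → x + l • v ∉ P := by
      intro l hl hmem
      have h1 : l' + l ∈ A := by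
        show z + (l' + l) • v ∈ P
        have h2 : z + (l' + l) • v = x + l • v := by rw [hxdef]; module
        rw [h2]; exact hmem
      have := le_csSup hAbdd h1
      linarith
    obtain ⟨u, huW, hxu, hvu⟩ := StarAux.exists_tight_pair hrep hWlat hxP hvP hvL hmove
    obtain ⟨n, hn⟩ := StarAux.dotProd_int hzL (hWlat u huW)
    have hl'eq : l' = (n:ℝ) + 1 := by
      have h1 : dotProd x u = dotProd z u + l' * dotProd v u := by
        rw [hxdef, StarAux.dotProd_add_left, StarAux.dotProd_smul_left]
      rw [hxu, hn, hvu] at h1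
      linarith
    have hxL : IsLatticePoint x := by
      intro i
      obtain ⟨zi, hzi⟩ := hzL i
      obtain ⟨vi, hvi⟩ := hvL i
      refine ⟨zi + (n+1) * vi, ?_⟩
      have h1 : x i = z i + l' * v i := rfl
      rw [h1, hzi, hvi, hl'eq]
      push_cast
      ring
    refine ⟨x, ⟨?_, hxL⟩, ?_⟩
    · rw [hstar]
      exact ⟨hxP, hmove⟩
    · have h1 : projAlong v x = projAlong v z + l' • projAlong v v := by
        rw [hxdef, map_add, map_smul]
      have hvq : projAlong v v = 0 := by
        show Submodule.mkQ _ v = 0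
        rw [Submodule.mkQ_apply, Submodule.Quotient.mk_eq_zero]
        exact Submodule.mem_span_singleton_self v
      rw [h1, hzq, hvq, smul_zero, add_zero]


end
end
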